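/- arXiv:2312.17182 — 2 statements merged into one kernel-verified Lean document; each statement's English description precedes it below -/
import Mathlib

section
/- (1) The assignment x₁ ↦ x₂, x₂ ↦ x₁, x₃ ↦ x₃ extends to a K-algebra isomorphism A_{x₁x₂}(q, α, μ) → A_{x₁x₂}(q⁻¹, μ, α). (2) The assignment x₁ ↦ x₁⁻¹, x₂ ↦ x₂, x₃ ↦ x₃ extends to a K-algebra isomorphism A_{x₁x₂}(q, α, μ) → A_{x₁x₂}(q⁻¹, −α, μ). -/
noncomputable section

/-- The defining relations of `A(q,α,μ)` together with the PBW-basis property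
(for arbitrary parameters `α`, `μ`). -/
def IsBiQuadRel {K : Type*} [Field K] {A : Type*} [Ring A] [Algebra K A]
    (q α μ : K) (x₁ x₂ x₃ : A) : Prop :=
  x₂ * x₁ = algebraMap K A q * (x₁ * x₂) ∧
  x₃ * x₁ = x₁ * (x₃ + algebraMap K A α) ∧
  x₃ * x₂ = x₂ * (x₃ + algebraMap K A μ) ∧
  ∀ a : A, ∃! f : ℕ × ℕ × ℕ →₀ K,
    a = f.sum fun v c => c • (x₁ ^ v.1 * x₂ ^ v.2.1 * x₃ ^ v.2.2)

/-- `B` is the localization `A_{x₁x₂}`. -/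
def IsOreLoc {K : Type*} [Field K] {A : Type*} [Ring A] [Algebra K A]
    {B : Type*} [Ring B] [Algebra K B] (ι : A →ₐ[K] B)
    (x₁ x₂ : A) (y₁ y₂ : B) : Prop :=
  Function.Injective ι ∧
  ι x₁ * y₁ = 1 ∧ y₁ * ι x₁ = 1 ∧ ι x₂ * y₂ = 1 ∧ y₂ * ι x₂ = 1 ∧
  ∀ b : B, ∃ (a : A) (i j : ℕ), b * ι (x₁ ^ i * x₂ ^ j) = ι a


namespace St7

variable {K : Type*} [Field K] {R : Type*} [Ring R] [Algebra K R]

/-- The three quasi-commutation relations. -/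
def Rel (q α μ : K) (w₁ w₂ : Rˣ) (s : R) : Prop :=
  ((w₂ : R) * w₁ = q • ((w₁ : R) * w₂)) ∧
  (s * w₁ = (w₁ : R) * (s + algebraMap K R α)) ∧
  (s * w₂ = (w₂ : R) * (s + algebraMap K R μ))

/-- Monomials with integer exponents on the units. -/
def Mon (w₁ w₂ : Rˣ) (s : R) (v : ℤ × ℤ × ℕ) : R :=
  ((w₁ ^ v.1 * w₂ ^ v.2.1 : Rˣ) : R) * s ^ v.2.2

variable {q α μ : K} {w₁ w₂ : Rˣ} {s : R}

lemma cancel_right (u : Rˣ) {a b : R} (hab : a * u = b * u) : a = b := by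
  have := congrArg (· * ((u⁻¹ : Rˣ) : R)) hab
  simpa [mul_assoc] using this

lemma rel_w2_w1_zpow (hq0 : q ≠ 0) (h : Rel q α μ w₁ w₂ s) (i : ℤ) :
    (w₂ : R) * ((w₁ ^ i : Rˣ) : R) = q ^ i • (((w₁ ^ i : Rˣ) : R) * w₂) := by
  induction i using Int.induction_on with
  | zero => simp
  | succ n ih =>
      have e1 : ((w₁ ^ ((n : ℤ) + 1) : Rˣ) : R) = ((w₁ ^ (n:ℤ) : Rˣ) : R) * w₁ := by
        rw [zpow_add_one]; simp
      rw [e1, ← mul_assoc, ih, smul_mul_assoc, mul_assoc, h.1, mul_smul_comm, smul_smul,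
        ← mul_assoc, zpow_add_one₀ hq0]
  | pred n ih =>
      apply cancel_right w₁
      have e1 : ((w₁ ^ (-(n:ℤ) - 1) : Rˣ) : R) * w₁ = ((w₁ ^ (-(n:ℤ)) : Rˣ) : R) := by
        rw [← Units.val_mul, ← zpow_add_one]; ring_nf
      calc (w₂ : R) * ((w₁ ^ (-(n:ℤ) - 1) : Rˣ) : R) * w₁
          = (w₂ : R) * ((w₁ ^ (-(n:ℤ)) : Rˣ) : R) := by rw [mul_assoc, e1]
        _ = q ^ (-(n:ℤ)) • (((w₁ ^ (-(n:ℤ)) : Rˣ) : R) * w₂) := ih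
        _ = q ^ (-(n:ℤ) - 1) • (((w₁ ^ (-(n:ℤ) - 1) : Rˣ) : R) * w₂) * w₁ := by
            rw [smul_mul_assoc, mul_assoc, h.1, mul_smul_comm, smul_smul, ← mul_assoc, e1,
              ← zpow_add_one₀ hq0]
            ring_nf

end St7

namespace St7

variable {K : Type*} [Field K] {R : Type*} [Ring R] [Algebra K R]
variable {q α μ : K} {w₁ w₂ : Rˣ} {s : R}

lemma cancel_left (u : Rˣ) {a b : R} (hab : (u : R) * a = (u : R) * b) : a = b := by
  have := congrArg (((u⁻¹ : Rˣ) : R) * ·) hab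
  simpa [← mul_assoc] using this

lemma rel_zpow_zpow (hq0 : q ≠ 0) (h : Rel q α μ w₁ w₂ s) (i j : ℤ) :
    ((w₂ ^ j : Rˣ) : R) * ((w₁ ^ i : Rˣ) : R) =
      q ^ (j * i) • (((w₁ ^ i : Rˣ) : R) * ((w₂ ^ j : Rˣ) : R)) := by
  induction j using Int.induction_on with
  | zero => simp
  | succ n ih =>
      have e1 : ((w₂ ^ ((n : ℤ) + 1) : Rˣ) : R) = (w₂ : R) * ((w₂ ^ (n:ℤ) : Rˣ) : R) := by
        rw [add_comm ((n:ℤ)) 1, zpow_add, zpow_one, Units.val_mul]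
      rw [e1, mul_assoc, ih, mul_smul_comm, ← mul_assoc, rel_w2_w1_zpow hq0 h,
        smul_mul_assoc, smul_smul, mul_assoc, ← e1, ← zpow_add₀ hq0]
      ring_nf
  | pred n ih =>
      apply cancel_left w₂
      have e1 : (w₂ : R) * ((w₂ ^ (-(n:ℤ) - 1) : Rˣ) : R) = ((w₂ ^ (-(n:ℤ)) : Rˣ) : R) := by
        rw [← Units.val_mul]
        congr 1
        group
      calc (w₂ : R) * (((w₂ ^ (-(n:ℤ) - 1) : Rˣ) : R) * ((w₁ ^ i : Rˣ) : R))
          = ((w₂ ^ (-(n:ℤ)) : Rˣ) : R) * ((w₁ ^ i : Rˣ) : R) := by rw [← mul_assoc, e1]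
        _ = q ^ (-(n:ℤ) * i) • (((w₁ ^ i : Rˣ) : R) * ((w₂ ^ (-(n:ℤ)) : Rˣ) : R)) := ih
        _ = (w₂ : R) * (q ^ ((-(n:ℤ) - 1) * i) •
              (((w₁ ^ i : Rˣ) : R) * ((w₂ ^ (-(n:ℤ) - 1) : Rˣ) : R))) := by
            rw [mul_smul_comm, ← mul_assoc, rel_w2_w1_zpow hq0 h, smul_mul_assoc, smul_smul,
              mul_assoc, e1, ← zpow_add₀ hq0]
            ring_nf

lemma rel_step {c : K} {w : R} (hw : s * w = w * (s + algebraMap K R c)) (d : K) :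
    (s + algebraMap K R d) * w = w * (s + algebraMap K R (c + d)) := by
  rw [add_mul, hw, Algebra.commutes d w, map_add, ← add_assoc, ← mul_add]

lemma rel_s_w1_zpow (h : Rel q α μ w₁ w₂ s) (i : ℤ) :
    s * ((w₁ ^ i : Rˣ) : R) = ((w₁ ^ i : Rˣ) : R) * (s + algebraMap K R (i • α)) := by
  induction i using Int.induction_on with
  | zero => simp
  | succ n ih =>
      have e1 : ((w₁ ^ ((n : ℤ) + 1) : Rˣ) : R) = ((w₁ ^ (n:ℤ) : Rˣ) : R) * w₁ := by
        rw [zpow_add_one]; simp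
      rw [e1, ← mul_assoc, ih, mul_assoc, rel_step h.2.1 (((n:ℤ)) • α), ← mul_assoc, ← e1,
        show ((n:ℤ)+1) • α = α + ((n:ℤ)) • α by rw [add_smul, one_smul, add_comm]]
  | pred n ih =>
      apply cancel_right w₁
      have e1 : ((w₁ ^ (-(n:ℤ) - 1) : Rˣ) : R) * w₁ = ((w₁ ^ (-(n:ℤ)) : Rˣ) : R) := by
        rw [← Units.val_mul, ← zpow_add_one]; ring_nf
      calc s * ((w₁ ^ (-(n:ℤ) - 1) : Rˣ) : R) * w₁
          = s * ((w₁ ^ (-(n:ℤ)) : Rˣ) : R) := by rw [mul_assoc, e1]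
        _ = ((w₁ ^ (-(n:ℤ)) : Rˣ) : R) * (s + algebraMap K R ((-(n:ℤ)) • α)) := ih
        _ = ((w₁ ^ (-(n:ℤ) - 1) : Rˣ) : R) * (s + algebraMap K R ((-(n:ℤ) - 1) • α)) * w₁ := by
            rw [mul_assoc, rel_step h.2.1, ← mul_assoc, e1,
              show (-(n:ℤ)) • α = α + (-(n:ℤ) - 1) • α by
                rw [sub_smul, one_smul, add_comm, sub_add_cancel]]

lemma rel_s_w2_zpow (h : Rel q α μ w₁ w₂ s) (j : ℤ) :
    s * ((w₂ ^ j : Rˣ) : R) = ((w₂ ^ j : Rˣ) : R) * (s + algebraMap K R (j • μ)) := by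
  induction j using Int.induction_on with
  | zero => simp
  | succ n ih =>
      have e1 : ((w₂ ^ ((n : ℤ) + 1) : Rˣ) : R) = ((w₂ ^ (n:ℤ) : Rˣ) : R) * w₂ := by
        rw [zpow_add_one]; simp
      rw [e1, ← mul_assoc, ih, mul_assoc, rel_step h.2.2 (((n:ℤ)) • μ), ← mul_assoc, ← e1,
        show ((n:ℤ)+1) • μ = μ + ((n:ℤ)) • μ by rw [add_smul, one_smul, add_comm]]
  | pred n ih =>
      apply cancel_right w₂
      have e1 : ((w₂ ^ (-(n:ℤ) - 1) : Rˣ) : R) * w₂ = ((w₂ ^ (-(n:ℤ)) : Rˣ) : R) := by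
        rw [← Units.val_mul, ← zpow_add_one]; ring_nf
      calc s * ((w₂ ^ (-(n:ℤ) - 1) : Rˣ) : R) * w₂
          = s * ((w₂ ^ (-(n:ℤ)) : Rˣ) : R) := by rw [mul_assoc, e1]
        _ = ((w₂ ^ (-(n:ℤ)) : Rˣ) : R) * (s + algebraMap K R ((-(n:ℤ)) • μ)) := ih
        _ = ((w₂ ^ (-(n:ℤ) - 1) : Rˣ) : R) * (s + algebraMap K R ((-(n:ℤ) - 1) • μ)) * w₂ := by
            rw [mul_assoc, rel_step h.2.2, ← mul_assoc, e1,
              show (-(n:ℤ)) • μ = μ + (-(n:ℤ) - 1) • μ by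
                rw [sub_smul, one_smul, add_comm, sub_add_cancel]]

lemma rel_s_mon (h : Rel q α μ w₁ w₂ s) (i j : ℤ) :
    s * ((w₁ ^ i * w₂ ^ j : Rˣ) : R) =
      ((w₁ ^ i * w₂ ^ j : Rˣ) : R) * (s + algebraMap K R (i • α + j • μ)) := by
  rw [Units.val_mul, ← mul_assoc, rel_s_w1_zpow h, mul_assoc, rel_step (rel_s_w2_zpow h j),
    ← mul_assoc, ← Units.val_mul, add_comm (j • μ)]

lemma rel_spow_mon (h : Rel q α μ w₁ w₂ s) (i j : ℤ) (k : ℕ) :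
    s ^ k * ((w₁ ^ i * w₂ ^ j : Rˣ) : R) =
      ((w₁ ^ i * w₂ ^ j : Rˣ) : R) * (s + algebraMap K R (i • α + j • μ)) ^ k := by
  induction k with
  | zero => simp
  | succ n ih =>
      rw [pow_succ', mul_assoc, ih, ← mul_assoc, rel_s_mon h, mul_assoc, ← pow_succ']

end St7

namespace St7

variable {K : Type*} [Field K] {R : Type*} [Ring R] [Algebra K R]
variable {q α μ : K} {w₁ w₂ : Rˣ} {s : R}

lemma mon_mul (hq0 : q ≠ 0) (h : Rel q α μ w₁ w₂ s) (v v' : ℤ × ℤ × ℕ) :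
    Mon w₁ w₂ s v * Mon w₁ w₂ s v' =
      ∑ l ∈ Finset.range (v.2.2 + 1),
        (q ^ (v.2.1 * v'.1) * (v'.1 • α + v'.2.1 • μ) ^ (v.2.2 - l) * (v.2.2.choose l : K)) •
          Mon w₁ w₂ s (v.1 + v'.1, v.2.1 + v'.2.1, l + v'.2.2) := by
  obtain ⟨i, j, k⟩ := v
  obtain ⟨i', j', k'⟩ := v'
  set c : K := i' • α + j' • μ with hc
  have hcomm : Commute s (algebraMap K R c) := (Algebra.commutes c s).symm
  have key : ∀ x : K, ∀ r : R, r * algebraMap K R x = x • r := fun x r => by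
    rw [← Algebra.commutes, ← Algebra.smul_def]
  have expand : (s + algebraMap K R c) ^ k * s ^ k' =
      ∑ l ∈ Finset.range (k + 1), ((c ^ (k - l) * (k.choose l : K)) • s ^ (l + k')) := by
    rw [hcomm.add_pow, Finset.sum_mul]
    refine Finset.sum_congr rfl fun l _ => ?_
    rw [← map_pow, ← map_natCast (algebraMap K R) (k.choose l), mul_assoc (s ^ l), ← map_mul,
      key, smul_mul_assoc, ← pow_add]
  have step2 : ((w₁ ^ i * w₂ ^ j : Rˣ) : R) * ((w₁ ^ i' * w₂ ^ j' : Rˣ) : R) =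
      q ^ (j * i') • ((w₁ ^ (i + i') * w₂ ^ (j + j') : Rˣ) : R) := by
    rw [Units.val_mul, Units.val_mul, mul_assoc, ← mul_assoc ((w₂ ^ j : Rˣ) : R),
      rel_zpow_zpow hq0 h, smul_mul_assoc, mul_smul_comm, Units.val_mul]
    congr 1
    rw [← mul_assoc, ← mul_assoc, ← Units.val_mul, ← zpow_add, mul_assoc, ← Units.val_mul,
      ← zpow_add]
  calc Mon w₁ w₂ s (i, j, k) * Mon w₁ w₂ s (i', j', k')
      = (((w₁ ^ i * w₂ ^ j : Rˣ) : R) * ((w₁ ^ i' * w₂ ^ j' : Rˣ) : R)) *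
          ((s + algebraMap K R c) ^ k * s ^ k') := by
        show ((w₁ ^ i * w₂ ^ j : Rˣ) : R) * s ^ k * (((w₁ ^ i' * w₂ ^ j' : Rˣ) : R) * s ^ k') = _
        rw [mul_assoc, ← mul_assoc (s ^ k), rel_spow_mon h, mul_assoc, ← mul_assoc]
    _ = ∑ l ∈ Finset.range (k + 1),
          (q ^ (j * i') * c ^ (k - l) * (k.choose l : K)) •
            Mon w₁ w₂ s (i + i', j + j', l + k') := by
        rw [step2, expand, smul_mul_assoc, Finset.mul_sum, Finset.smul_sum]
        refine Finset.sum_congr rfl fun l _ => ?_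
        rw [mul_smul_comm, smul_smul, mul_assoc]
        rfl

lemma mon_mul_left (hq0 : q ≠ 0) (h : Rel q α μ w₁ w₂ s) (N M : ℤ) (v : ℤ × ℤ × ℕ) :
    Mon w₁ w₂ s (N, M, 0) * Mon w₁ w₂ s v =
      q ^ (M * v.1) • Mon w₁ w₂ s (N + v.1, M + v.2.1, v.2.2) := by
  have := mon_mul hq0 h (N, M, 0) v
  simpa using this

lemma mon_zero_eq_one : Mon w₁ w₂ s (0, 0, 0) = 1 := by simp [Mon]

end St7

namespace St7

variable {K : Type*} [Field K] {R : Type*} [Ring R] [Algebra K R]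

/-- `R` is a "localized PBW algebra" on `(w₁, w₂, s)`. -/
def LocPBW (q α μ : K) (w₁ w₂ : Rˣ) (s : R) : Prop :=
  Rel q α μ w₁ w₂ s ∧
  ∀ b : R, ∃! f : ℤ × ℤ × ℕ →₀ K, b = f.sum fun v c => c • Mon w₁ w₂ s v

variable {q α μ : K} {w₁ w₂ : Rˣ} {s : R}

def rep (hL : LocPBW q α μ w₁ w₂ s) (b : R) : ℤ × ℤ × ℕ →₀ K :=
  (hL.2 b).exists.choose

lemma rep_spec (hL : LocPBW q α μ w₁ w₂ s) (b : R) :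
    b = (rep hL b).sum fun v c => c • Mon w₁ w₂ s v :=
  (hL.2 b).exists.choose_spec

lemma rep_unique (hL : LocPBW q α μ w₁ w₂ s) {b : R} {f : ℤ × ℤ × ℕ →₀ K}
    (hf : b = f.sum fun v c => c • Mon w₁ w₂ s v) : f = rep hL b :=
  (hL.2 b).unique hf (rep_spec hL b)

lemma rep_sum_eq (hL : LocPBW q α μ w₁ w₂ s) (f : ℤ × ℤ × ℕ →₀ K) :
    rep hL (f.sum fun v c => c • Mon w₁ w₂ s v) = f :=
  (rep_unique hL rfl).symm

lemma sum_add_mon {f g : ℤ × ℤ × ℕ →₀ K} {x₁ x₂ : Rˣ} {t : R} :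
    ((f + g).sum fun v c => c • Mon x₁ x₂ t v) =
      (f.sum fun v c => c • Mon x₁ x₂ t v) + g.sum fun v c => c • Mon x₁ x₂ t v :=
  Finsupp.sum_add_index' (fun v => zero_smul K _) (fun v c₁ c₂ => add_smul c₁ c₂ _)

lemma sum_smul_mon {f : ℤ × ℤ × ℕ →₀ K} {k : K} {x₁ x₂ : Rˣ} {t : R} :
    ((k • f).sum fun v c => c • Mon x₁ x₂ t v) =
      k • f.sum fun v c => c • Mon x₁ x₂ t v := by
  rw [Finsupp.sum_smul_index' (h := fun v c => c • Mon x₁ x₂ t v) (fun v => zero_smul K _)]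
  simp_rw [smul_eq_mul, mul_smul]
  rw [← Finsupp.smul_sum]

lemma sum_single_mon {u : ℤ × ℤ × ℕ} {k : K} {x₁ x₂ : Rˣ} {t : R} :
    ((Finsupp.single u k).sum fun v c => c • Mon x₁ x₂ t v) = k • Mon x₁ x₂ t u :=
  Finsupp.sum_single_index (zero_smul K _)

lemma rep_add (hL : LocPBW q α μ w₁ w₂ s) (a b : R) :
    rep hL (a + b) = rep hL a + rep hL b := by
  refine (rep_unique hL ?_).symm
  rw [sum_add_mon, ← rep_spec hL a, ← rep_spec hL b]

lemma rep_smul (hL : LocPBW q α μ w₁ w₂ s) (k : K) (b : R) :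
    rep hL (k • b) = k • rep hL b := by
  refine (rep_unique hL ?_).symm
  rw [sum_smul_mon, ← rep_spec hL b]

lemma rep_mon (hL : LocPBW q α μ w₁ w₂ s) (u : ℤ × ℤ × ℕ) :
    rep hL (Mon w₁ w₂ s u) = Finsupp.single u 1 := by
  refine (rep_unique hL ?_).symm
  rw [sum_single_mon, one_smul]

section Hom

variable {C : Type*} [Ring C] [Algebra K C] {v₁ v₂ : Cˣ} {r : C}

/-- The linear map underlying the universal morphism. -/
def homL (hL : LocPBW q α μ w₁ w₂ s) (v₁ v₂ : Cˣ) (r : C) : R →ₗ[K] C where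
  toFun b := (rep hL b).sum fun v c => c • Mon v₁ v₂ r v
  map_add' a b := by
    show ((rep hL (a + b)).sum fun v c => c • Mon v₁ v₂ r v) = _
    rw [rep_add hL, sum_add_mon]
  map_smul' k b := by
    show ((rep hL (k • b)).sum fun v c => c • Mon v₁ v₂ r v) = _
    rw [rep_smul hL, sum_smul_mon]
    rfl

lemma homL_apply (hL : LocPBW q α μ w₁ w₂ s) (b : R) :
    homL hL v₁ v₂ r b = (rep hL b).sum fun v c => c • Mon v₁ v₂ r v := rfl

lemma homL_mon (hL : LocPBW q α μ w₁ w₂ s) (u : ℤ × ℤ × ℕ) :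
    homL hL v₁ v₂ r (Mon w₁ w₂ s u) = Mon v₁ v₂ r u := by
  rw [homL_apply, rep_mon hL, sum_single_mon, one_smul]

lemma homL_one (hL : LocPBW q α μ w₁ w₂ s) : homL hL v₁ v₂ r 1 = 1 := by
  have h1 := homL_mon (v₁ := v₁) (v₂ := v₂) (r := r) hL (0, 0, 0)
  rwa [mon_zero_eq_one, mon_zero_eq_one] at h1

lemma homL_mon_mul (hq0 : q ≠ 0) (hL : LocPBW q α μ w₁ w₂ s) (hC : Rel q α μ v₁ v₂ r)
    (u u' : ℤ × ℤ × ℕ) :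
    homL hL v₁ v₂ r (Mon w₁ w₂ s u * Mon w₁ w₂ s u') = Mon v₁ v₂ r u * Mon v₁ v₂ r u' := by
  rw [mon_mul hq0 hL.1 u u', map_sum, mon_mul hq0 hC u u']
  refine Finset.sum_congr rfl fun l _ => ?_
  rw [map_smul, homL_mon hL]

lemma homL_mon_mul_right (hq0 : q ≠ 0) (hL : LocPBW q α μ w₁ w₂ s) (hC : Rel q α μ v₁ v₂ r)
    (u : ℤ × ℤ × ℕ) (b : R) :
    homL hL v₁ v₂ r (Mon w₁ w₂ s u * b) = Mon v₁ v₂ r u * homL hL v₁ v₂ r b := by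
  conv_lhs => rw [rep_spec hL b]
  rw [Finsupp.mul_sum, map_finsuppSum]
  rw [homL_apply, Finsupp.mul_sum]
  refine Finsupp.sum_congr fun v _ => ?_
  rw [mul_smul_comm, map_smul, mul_smul_comm, homL_mon_mul hq0 hL hC]

lemma homL_mul (hq0 : q ≠ 0) (hL : LocPBW q α μ w₁ w₂ s) (hC : Rel q α μ v₁ v₂ r)
    (a b : R) :
    homL hL v₁ v₂ r (a * b) = homL hL v₁ v₂ r a * homL hL v₁ v₂ r b := by
  conv_lhs => rw [rep_spec hL a]
  rw [Finsupp.sum_mul, map_finsuppSum]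
  rw [homL_apply hL a, Finsupp.sum_mul]
  refine Finsupp.sum_congr fun v _ => ?_
  rw [smul_mul_assoc, map_smul, homL_mon_mul_right hq0 hL hC, smul_mul_assoc]

/-- The universal algebra morphism out of a localized PBW algebra. -/
def homA (hq0 : q ≠ 0) (hL : LocPBW q α μ w₁ w₂ s) (hC : Rel q α μ v₁ v₂ r) : R →ₐ[K] C :=
  AlgHom.mk'
    { toFun := homL hL v₁ v₂ r
      map_one' := homL_one hL
      map_mul' := homL_mul hq0 hL hC
      map_zero' := map_zero _
      map_add' := map_add _ }
    (fun k x => map_smul (homL hL v₁ v₂ r) k x)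

lemma homA_mon (hq0 : q ≠ 0) (hL : LocPBW q α μ w₁ w₂ s) (hC : Rel q α μ v₁ v₂ r)
    (u : ℤ × ℤ × ℕ) : homA hq0 hL hC (Mon w₁ w₂ s u) = Mon v₁ v₂ r u :=
  homL_mon hL u

end Hom

section Ext

variable {C : Type*} [Ring C] [Algebra K C]

lemma alghom_mon (ψ : R →ₐ[K] C) (v : ℤ × ℤ × ℕ) :
    ψ (Mon w₁ w₂ s v) =
      ((Units.map (ψ : R →* C) w₁ ^ v.1 * Units.map (ψ : R →* C) w₂ ^ v.2.1 : Cˣ) : C) *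
        ψ s ^ v.2.2 := by
  rw [Mon, map_mul, map_pow]
  congr 1
  rw [Units.val_mul, map_mul, Units.val_mul, ← map_zpow, ← map_zpow, Units.coe_map,
    Units.coe_map]
  rfl

lemma hom_ext (hL : LocPBW q α μ w₁ w₂ s) {ψ₁ ψ₂ : R →ₐ[K] C}
    (h1 : ψ₁ w₁ = ψ₂ w₁) (h2 : ψ₁ w₂ = ψ₂ w₂) (hs : ψ₁ s = ψ₂ s) : ψ₁ = ψ₂ := by
  have hu1 : Units.map (ψ₁ : R →* C) w₁ = Units.map (ψ₂ : R →* C) w₁ := Units.ext h1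
  have hu2 : Units.map (ψ₁ : R →* C) w₂ = Units.map (ψ₂ : R →* C) w₂ := Units.ext h2
  have hmon : ∀ v, ψ₁ (Mon w₁ w₂ s v) = ψ₂ (Mon w₁ w₂ s v) := fun v => by
    rw [alghom_mon, alghom_mon, hu1, hu2, hs]
  ext b
  rw [rep_spec hL b, map_finsuppSum, map_finsuppSum]
  exact Finsupp.sum_congr fun v _ => by rw [map_smul, map_smul, hmon v]

end Ext

end St7

namespace St7

variable {K : Type*} [Field K] {q α μ : K}

theorem loc_of_ore {A : Type*} [Ring A] [Algebra K A] {x₁ x₂ x₃ : A}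
    (hq0 : q ≠ 0) (hA : IsBiQuadRel q α μ x₁ x₂ x₃)
    {B : Type*} [Ring B] [Algebra K B] {ι : A →ₐ[K] B} {y₁ y₂ : B}
    (hB : IsOreLoc ι x₁ x₂ y₁ y₂) :
    LocPBW q α μ (⟨ι x₁, y₁, hB.2.1, hB.2.2.1⟩ : Bˣ)
      (⟨ι x₂, y₂, hB.2.2.2.1, hB.2.2.2.2.1⟩ : Bˣ) (ι x₃) := by
  set u₁ : Bˣ := ⟨ι x₁, y₁, hB.2.1, hB.2.2.1⟩ with hu₁
  set u₂ : Bˣ := ⟨ι x₂, y₂, hB.2.2.2.1, hB.2.2.2.2.1⟩ with hu₂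
  set t : B := ι x₃ with ht
  have hrel : Rel q α μ u₁ u₂ t := by
    refine ⟨?_, ?_, ?_⟩
    · show ι x₂ * ι x₁ = q • (ι x₁ * ι x₂)
      rw [← map_mul, ← map_mul, hA.1, map_mul, AlgHom.commutes, ← Algebra.smul_def]
    · show ι x₃ * ι x₁ = ι x₁ * (ι x₃ + algebraMap K B α)
      rw [← map_mul, hA.2.1, map_mul, map_add, AlgHom.commutes]
    · show ι x₃ * ι x₂ = ι x₂ * (ι x₃ + algebraMap K B μ)
      rw [← map_mul, hA.2.2.1, map_mul, map_add, AlgHom.commutes]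
  have monNat : ∀ p r k : ℕ, Mon u₁ u₂ t ((p : ℤ), (r : ℤ), k) = ι (x₁ ^ p * x₂ ^ r * x₃ ^ k) := by
    intro p r k
    rw [Mon, zpow_natCast, zpow_natCast, Units.val_mul, Units.val_pow_eq_pow_val,
      Units.val_pow_eq_pow_val, map_mul, map_mul, map_pow, map_pow, map_pow]
  -- spanning
  have hspan : ∀ b : B, b ∈ Submodule.span K (Set.range (Mon u₁ u₂ t)) := by
    have hι : ∀ a : A, ι a ∈ Submodule.span K (Set.range (Mon u₁ u₂ t)) := by
      intro a
      obtain ⟨f, hf, -⟩ := hA.2.2.2 a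
      rw [hf, map_finsuppSum]
      refine Submodule.sum_mem _ fun v _ => ?_
      dsimp only
      rw [map_smul]
      exact Submodule.smul_mem _ _
        (Submodule.subset_span ⟨((v.1 : ℤ), (v.2.1 : ℤ), v.2.2), monNat _ _ _⟩)
    have hmul : ∀ x : B, x ∈ Submodule.span K (Set.range (Mon u₁ u₂ t)) → ∀ v' : ℤ × ℤ × ℕ,
        x * Mon u₁ u₂ t v' ∈ Submodule.span K (Set.range (Mon u₁ u₂ t)) := by
      intro x hx v'
      induction hx using Submodule.span_induction with
      | mem z hz =>
          obtain ⟨v, rfl⟩ := hz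
          rw [mon_mul hq0 hrel]
          exact Submodule.sum_mem _ fun l _ =>
            Submodule.smul_mem _ _ (Submodule.subset_span ⟨_, rfl⟩)
      | zero => rw [zero_mul]; exact Submodule.zero_mem _
      | add a b _ _ ha hb => rw [add_mul]; exact Submodule.add_mem _ ha hb
      | smul k a _ ha => rw [smul_mul_assoc]; exact Submodule.smul_mem _ _ ha
    intro b
    obtain ⟨a, i, j, hab⟩ := hB.2.2.2.2.2 b
    have hunit : ι (x₁ ^ i * x₂ ^ j) = ((u₁ ^ i * u₂ ^ j : Bˣ) : B) := by
      rw [map_mul, map_pow, map_pow, Units.val_mul, Units.val_pow_eq_pow_val,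
        Units.val_pow_eq_pow_val]
    have hb : b = ι a * (((u₁ ^ i * u₂ ^ j : Bˣ)⁻¹ : Bˣ) : B) := by
      rw [hunit] at hab
      rw [← hab, mul_assoc, Units.mul_inv, mul_one]
    have hinv : (((u₁ ^ i * u₂ ^ j : Bˣ)⁻¹ : Bˣ) : B) =
        q ^ ((-(j : ℤ)) * (-(i : ℤ))) • Mon u₁ u₂ t (-(i : ℤ), -(j : ℤ), 0) := by
      rw [Mon, pow_zero, mul_one, mul_inv_rev, Units.val_mul, ← zpow_natCast u₁, ← zpow_natCast u₂,
        ← zpow_neg, ← zpow_neg, rel_zpow_zpow hq0 hrel, Units.val_mul]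
    rw [hb, hinv, mul_smul_comm]
    exact Submodule.smul_mem _ _ (hmul _ (hι a) _)
  -- linear independence
  have hind : ∀ f : ℤ × ℤ × ℕ →₀ K, (f.sum fun v c => c • Mon u₁ u₂ t v) = 0 → f = 0 := by
    intro f hf
    set N : ℕ := f.support.sup fun v => (-v.1).toNat with hN
    set M : ℕ := f.support.sup fun v => (-v.2.1).toNat with hM
    have hNv : ∀ v ∈ f.support, (0 : ℤ) ≤ (N : ℤ) + v.1 := by
      intro v hv
      have h1 : (-v.1).toNat ≤ N := Finset.le_sup (f := fun v => (-v.1).toNat) hv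
      have h2 : -v.1 ≤ ((-v.1).toNat : ℤ) := Int.self_le_toNat _
      omega
    have hMv : ∀ v ∈ f.support, (0 : ℤ) ≤ (M : ℤ) + v.2.1 := by
      intro v hv
      have h1 : (-v.2.1).toNat ≤ M := Finset.le_sup (f := fun v => (-v.2.1).toNat) hv
      have h2 : -v.2.1 ≤ ((-v.2.1).toNat : ℤ) := Int.self_le_toNat _
      omega
    set e : ℤ × ℤ × ℕ → ℕ × ℕ × ℕ :=
      fun v => (((N : ℤ) + v.1).toNat, ((M : ℤ) + v.2.1).toNat, v.2.2) with he
    have einj : ∀ v ∈ f.support, ∀ v' ∈ f.support, e v = e v' → v = v' := by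
      intro v hv v' hv' hee
      have e1 := congrArg Prod.fst hee
      have e2 := congrArg (fun w => w.2.1) hee
      have e3 := congrArg (fun w => w.2.2) hee
      simp only [he] at e1 e2 e3
      have := hNv v hv; have := hNv v' hv'; have := hMv v hv; have := hMv v' hv'
      have : v.1 = v'.1 := by omega
      have : v.2.1 = v'.2.1 := by omega
      exact Prod.ext ‹v.1 = v'.1› (Prod.ext ‹v.2.1 = v'.2.1› e3)
    have h0 : (0 : B) = ∑ v ∈ f.support,
        (f v * q ^ ((M : ℤ) * v.1)) • Mon u₁ u₂ t ((N : ℤ) + v.1, (M : ℤ) + v.2.1, v.2.2) := by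
      calc (0 : B) = Mon u₁ u₂ t ((N : ℤ), (M : ℤ), 0) * f.sum fun v c => c • Mon u₁ u₂ t v := by
            rw [hf, mul_zero]
        _ = _ := by
            rw [Finsupp.mul_sum, Finsupp.sum]
            refine Finset.sum_congr rfl fun v _ => ?_
            rw [mul_smul_comm, mon_mul_left hq0 hrel, smul_smul]
    have h1 : (0 : B) = ι (∑ v ∈ f.support, (f v * q ^ ((M : ℤ) * v.1)) •
        (x₁ ^ ((N : ℤ) + v.1).toNat * x₂ ^ ((M : ℤ) + v.2.1).toNat * x₃ ^ v.2.2)) := by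
      rw [map_sum, h0]
      refine Finset.sum_congr rfl fun v hv => ?_
      rw [map_smul, ← monNat, Int.toNat_of_nonneg (hNv v hv), Int.toNat_of_nonneg (hMv v hv)]
    have haele : (∑ v ∈ f.support, (f v * q ^ ((M : ℤ) * v.1)) •
        (x₁ ^ ((N : ℤ) + v.1).toNat * x₂ ^ ((M : ℤ) + v.2.1).toNat * x₃ ^ v.2.2)) = 0 :=
      hB.1 (by rw [← h1, map_zero])
    set g : ℕ × ℕ × ℕ →₀ K :=
      ∑ v ∈ f.support, Finsupp.single (e v) (f v * q ^ ((M : ℤ) * v.1)) with hg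
    have hgsum : (0 : A) = g.sum fun w c => c • (x₁ ^ w.1 * x₂ ^ w.2.1 * x₃ ^ w.2.2) := by
      rw [hg, ← Finsupp.sum_finsetSum_index (h := fun (w : ℕ × ℕ × ℕ) (c : K) => c • (x₁ ^ w.1 * x₂ ^ w.2.1 * x₃ ^ w.2.2))
        (fun w => zero_smul K _) (fun w c₁ c₂ => add_smul c₁ c₂ _), ← haele]
      refine Finset.sum_congr rfl fun v _ => ?_
      rw [Finsupp.sum_single_index]
      exact zero_smul K _
    have hg0 : g = 0 := (hA.2.2.2 0).unique hgsum (by simp)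
    by_contra hf0
    obtain ⟨v₀, hv₀⟩ := Finsupp.ne_iff.mp hf0
    rw [Finsupp.coe_zero, Pi.zero_apply] at hv₀
    have hv₀s : v₀ ∈ f.support := Finsupp.mem_support_iff.mpr hv₀
    have hgev : g (e v₀) = f v₀ * q ^ ((M : ℤ) * v₀.1) := by
      rw [hg, Finsupp.finset_sum_apply]
      rw [Finset.sum_eq_single v₀]
      · rw [Finsupp.single_apply, if_pos rfl]
      · intro v hv hne
        rw [Finsupp.single_apply, if_neg]
        exact fun hee => hne (einj v hv v₀ hv₀s hee)
      · intro h; exact absurd hv₀s h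
    rw [hg0, Finsupp.coe_zero, Pi.zero_apply] at hgev
    exact hv₀ (by
      have hqz : q ^ ((M : ℤ) * v₀.1) ≠ 0 := zpow_ne_zero _ hq0
      field_simp at hgev
      exact (mul_eq_zero.mp hgev.symm).resolve_right hqz)
  refine ⟨hrel, fun b => ?_⟩
  obtain ⟨f, hfb⟩ := (Finsupp.mem_span_range_iff_exists_finsupp).mp (hspan b)
  refine ⟨f, hfb.symm, fun g hgb => ?_⟩
  have hsub : ((g - f).sum fun v c => c • Mon u₁ u₂ t v) = 0 := by
    rw [Finsupp.sum_sub_index (fun v c₁ c₂ => sub_smul c₁ c₂ _), ← hgb, hfb, sub_self]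
  have := hind _ hsub
  rwa [sub_eq_zero] at this

end St7

namespace St7

variable {K : Type*} [Field K] {R : Type*} [Ring R] [Algebra K R]
variable {q α μ : K} {w₁ w₂ : Rˣ} {s : R}

lemma mon_e1 : Mon w₁ w₂ s (1, 0, 0) = (w₁ : R) := by simp [Mon]

lemma mon_e2 : Mon w₁ w₂ s (0, 1, 0) = (w₂ : R) := by simp [Mon]

lemma mon_e3 : Mon w₁ w₂ s (0, 0, 1) = s := by simp [Mon]

lemma mon_ne1 : Mon w₁ w₂ s (-1, 0, 0) = ((w₁⁻¹ : Rˣ) : R) := by simp [Mon]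

lemma rel_inv₁ (hq0 : q ≠ 0) (h : Rel q α μ w₁ w₂ s) : Rel q⁻¹ (-α) μ w₁⁻¹ w₂ s := by
  refine ⟨?_, ?_, h.2.2⟩
  · have h1 := rel_zpow_zpow hq0 h (-1) 1
    simpa [zpow_neg, zpow_one] using h1
  · have h1 := rel_s_w1_zpow h (-1)
    simpa [zpow_neg, zpow_one] using h1

end St7

open St7 in
theorem statement7' {K : Type*} [Field K] (q α μ : K)
    (hq0 : q ≠ 0) (hq1 : q ≠ 1) (hαμ : α + μ ≠ 0)
    {A : Type*} [Ring A] [Algebra K A] (x₁ x₂ x₃ : A)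
    (hA : IsBiQuadRel q α μ x₁ x₂ x₃)
    {B : Type*} [Ring B] [Algebra K B] (ι : A →ₐ[K] B) (y₁ y₂ : B)
    (hB : IsOreLoc ι x₁ x₂ y₁ y₂)
    {A' : Type*} [Ring A'] [Algebra K A'] (x₁' x₂' x₃' : A')
    (hA' : IsBiQuadRel q⁻¹ μ α x₁' x₂' x₃')
    {B' : Type*} [Ring B'] [Algebra K B'] (ι' : A' →ₐ[K] B') (y₁' y₂' : B')
    (hB' : IsOreLoc ι' x₁' x₂' y₁' y₂')
    {A'' : Type*} [Ring A''] [Algebra K A''] (x₁'' x₂'' x₃'' : A'')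
    (hA'' : IsBiQuadRel q⁻¹ (-α) μ x₁'' x₂'' x₃'')
    {B'' : Type*} [Ring B''] [Algebra K B''] (ι'' : A'' →ₐ[K] B'') (y₁'' y₂'' : B'')
    (hB'' : IsOreLoc ι'' x₁'' x₂'' y₁'' y₂'') :
    (∃ φ : B ≃ₐ[K] B',
      φ (ι x₁) = ι' x₂' ∧ φ (ι x₂) = ι' x₁' ∧ φ (ι x₃) = ι' x₃')
    ∧ (∃ ψ : B ≃ₐ[K] B'',
      ψ (ι x₁) = y₁'' ∧ ψ (ι x₂) = ι'' x₂'' ∧ ψ (ι x₃) = ι'' x₃'') := by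
  have hq0' : q⁻¹ ≠ 0 := inv_ne_zero hq0
  set u₁ : Bˣ := ⟨ι x₁, y₁, hB.2.1, hB.2.2.1⟩ with hu₁
  set u₂ : Bˣ := ⟨ι x₂, y₂, hB.2.2.2.1, hB.2.2.2.2.1⟩ with hu₂
  set u₁' : B'ˣ := ⟨ι' x₁', y₁', hB'.2.1, hB'.2.2.1⟩ with hu₁'
  set u₂' : B'ˣ := ⟨ι' x₂', y₂', hB'.2.2.2.1, hB'.2.2.2.2.1⟩ with hu₂'
  set u₁'' : B''ˣ := ⟨ι'' x₁'', y₁'', hB''.2.1, hB''.2.2.1⟩ with hu₁''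
  set u₂'' : B''ˣ := ⟨ι'' x₂'', y₂'', hB''.2.2.2.1, hB''.2.2.2.2.1⟩ with hu₂''
  have hL : LocPBW q α μ u₁ u₂ (ι x₃) := loc_of_ore hq0 hA hB
  have hL' : LocPBW q⁻¹ μ α u₁' u₂' (ι' x₃') := loc_of_ore hq0' hA' hB'
  have hL'' : LocPBW q⁻¹ (-α) μ u₁'' u₂'' (ι'' x₃'') := loc_of_ore hq0' hA'' hB''
  constructor
  · -- the swap isomorphism
    have hC : Rel q α μ u₂' u₁' (ι' x₃') := by
      refine ⟨?_, ?_, ?_⟩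
      · show ι' x₁' * ι' x₂' = q • (ι' x₂' * ι' x₁')
        have hx : x₁' * x₂' = algebraMap K A' q * (x₂' * x₁') := by
          rw [hA'.1, ← mul_assoc, ← map_mul, mul_inv_cancel₀ hq0, map_one, one_mul]
        rw [← map_mul, ← map_mul, hx, map_mul, AlgHom.commutes, ← Algebra.smul_def]
      · show ι' x₃' * ι' x₂' = ι' x₂' * (ι' x₃' + algebraMap K B' α)
        rw [← map_mul, hA'.2.2.1, map_mul, map_add, AlgHom.commutes]
      · show ι' x₃' * ι' x₁' = ι' x₁' * (ι' x₃' + algebraMap K B' μ)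
        rw [← map_mul, hA'.2.1, map_mul, map_add, AlgHom.commutes]
    have hC' : Rel q⁻¹ μ α u₂ u₁ (ι x₃) := by
      refine ⟨?_, ?_, ?_⟩
      · show ι x₁ * ι x₂ = q⁻¹ • (ι x₂ * ι x₁)
        have hx : x₁ * x₂ = algebraMap K A q⁻¹ * (x₂ * x₁) := by
          rw [hA.1, ← mul_assoc, ← map_mul, inv_mul_cancel₀ hq0, map_one, one_mul]
        rw [← map_mul, ← map_mul, hx, map_mul, AlgHom.commutes, ← Algebra.smul_def]
      · show ι x₃ * ι x₂ = ι x₂ * (ι x₃ + algebraMap K B μ)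
        rw [← map_mul, hA.2.2.1, map_mul, map_add, AlgHom.commutes]
      · show ι x₃ * ι x₁ = ι x₁ * (ι x₃ + algebraMap K B α)
        rw [← map_mul, hA.2.1, map_mul, map_add, AlgHom.commutes]
    set φ : B →ₐ[K] B' := homA hq0 hL hC with hφ
    set φ' : B' →ₐ[K] B := homA hq0' hL' hC' with hφ'
    have hφu₁ : φ ((u₁ : B)) = (u₂' : B') := by
      rw [hφ, ← mon_e1 (w₂ := u₂) (s := ι x₃), homA_mon, mon_e1]
    have hφu₂ : φ ((u₂ : B)) = (u₁' : B') := by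
      rw [hφ, ← mon_e2 (w₁ := u₁) (s := ι x₃), homA_mon, mon_e2]
    have hφt : φ (ι x₃) = ι' x₃' := by
      have h := homA_mon hq0 hL hC (0, 0, 1)
      rwa [mon_e3, mon_e3] at h
    have hφ'u₁ : φ' ((u₁' : B')) = (u₂ : B) := by
      rw [hφ', ← mon_e1 (w₂ := u₂') (s := ι' x₃'), homA_mon, mon_e1]
    have hφ'u₂ : φ' ((u₂' : B')) = (u₁ : B) := by
      rw [hφ', ← mon_e2 (w₁ := u₁') (s := ι' x₃'), homA_mon, mon_e2]
    have hφ't : φ' (ι' x₃') = ι x₃ := by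
      have h := homA_mon hq0' hL' hC' (0, 0, 1)
      rwa [mon_e3, mon_e3] at h
    have c1 : φ.comp φ' = AlgHom.id K B' := by
      refine hom_ext hL' ?_ ?_ ?_
      · rw [AlgHom.comp_apply, hφ'u₁, hφu₂, AlgHom.id_apply]
      · rw [AlgHom.comp_apply, hφ'u₂, hφu₁, AlgHom.id_apply]
      · rw [AlgHom.comp_apply, hφ't, hφt, AlgHom.id_apply]
    have c2 : φ'.comp φ = AlgHom.id K B := by
      refine hom_ext hL ?_ ?_ ?_
      · rw [AlgHom.comp_apply, hφu₁, hφ'u₂, AlgHom.id_apply]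
      · rw [AlgHom.comp_apply, hφu₂, hφ'u₁, AlgHom.id_apply]
      · rw [AlgHom.comp_apply, hφt, hφ't, AlgHom.id_apply]
    exact ⟨AlgEquiv.ofAlgHom φ φ' c1 c2, hφu₁, hφu₂, hφt⟩
  · -- the inversion isomorphism
    have hC : Rel q α μ (u₁''⁻¹) u₂'' (ι'' x₃'') := by
      have h1 := rel_inv₁ hq0' hL''.1
      rwa [inv_inv, neg_neg] at h1
    have hC' : Rel q⁻¹ (-α) μ (u₁⁻¹) u₂ (ι x₃) := rel_inv₁ hq0 hL.1
    set ψ : B →ₐ[K] B'' := homA hq0 hL hC with hψ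
    set ψ' : B'' →ₐ[K] B := homA hq0' hL'' hC' with hψ'
    have hψu₁ : ψ ((u₁ : B)) = ((u₁''⁻¹ : B''ˣ) : B'') := by
      rw [hψ, ← mon_e1 (w₂ := u₂) (s := ι x₃), homA_mon, mon_e1]
    have hψu₁' : ψ (((u₁⁻¹ : Bˣ) : B)) = (u₁'' : B'') := by
      rw [hψ, ← mon_ne1 (w₂ := u₂) (s := ι x₃), homA_mon, mon_ne1, inv_inv]
    have hψu₂ : ψ ((u₂ : B)) = (u₂'' : B'') := by
      rw [hψ, ← mon_e2 (w₁ := u₁) (s := ι x₃), homA_mon, mon_e2]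
    have hψt : ψ (ι x₃) = ι'' x₃'' := by
      have h := homA_mon hq0 hL hC (0, 0, 1)
      rwa [mon_e3, mon_e3] at h
    have hψ'u₁ : ψ' ((u₁'' : B'')) = ((u₁⁻¹ : Bˣ) : B) := by
      rw [hψ', ← mon_e1 (w₂ := u₂'') (s := ι'' x₃''), homA_mon, mon_e1]
    have hψ'u₁' : ψ' (((u₁''⁻¹ : B''ˣ) : B'')) = (u₁ : B) := by
      rw [hψ', ← mon_ne1 (w₂ := u₂'') (s := ι'' x₃''), homA_mon, mon_ne1, inv_inv]
    have hψ'u₂ : ψ' ((u₂'' : B'')) = (u₂ : B) := by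
      rw [hψ', ← mon_e2 (w₁ := u₁'') (s := ι'' x₃''), homA_mon, mon_e2]
    have hψ't : ψ' (ι'' x₃'') = ι x₃ := by
      have h := homA_mon hq0' hL'' hC' (0, 0, 1)
      rwa [mon_e3, mon_e3] at h
    have c1 : ψ.comp ψ' = AlgHom.id K B'' := by
      refine hom_ext hL'' ?_ ?_ ?_
      · rw [AlgHom.comp_apply, hψ'u₁, hψu₁', AlgHom.id_apply]
      · rw [AlgHom.comp_apply, hψ'u₂, hψu₂, AlgHom.id_apply]
      · rw [AlgHom.comp_apply, hψ't, hψt, AlgHom.id_apply]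
    have c2 : ψ'.comp ψ = AlgHom.id K B := by
      refine hom_ext hL ?_ ?_ ?_
      · rw [AlgHom.comp_apply, hψu₁, hψ'u₁', AlgHom.id_apply]
      · rw [AlgHom.comp_apply, hψu₂, hψ'u₂, AlgHom.id_apply]
      · rw [AlgHom.comp_apply, hψt, hψ't, AlgHom.id_apply]
    exact ⟨AlgEquiv.ofAlgHom ψ ψ' c1 c2, hψu₁, hψu₂, hψt⟩

theorem statement7 {K : Type*} [Field K] (q α μ : K)
    (hq0 : q ≠ 0) (hq1 : q ≠ 1) (hαμ : α + μ ≠ 0)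
    -- the algebra `A(q,α,μ)` and its localization `B`
    {A : Type*} [Ring A] [Algebra K A] (x₁ x₂ x₃ : A)
    (hA : IsBiQuadRel q α μ x₁ x₂ x₃)
    {B : Type*} [Ring B] [Algebra K B] (ι : A →ₐ[K] B) (y₁ y₂ : B)
    (hB : IsOreLoc ι x₁ x₂ y₁ y₂)
    -- the algebra `A(q⁻¹,μ,α)` and its localization `B'`
    {A' : Type*} [Ring A'] [Algebra K A'] (x₁' x₂' x₃' : A')
    (hA' : IsBiQuadRel q⁻¹ μ α x₁' x₂' x₃')
    {B' : Type*} [Ring B'] [Algebra K B'] (ι' : A' →ₐ[K] B') (y₁' y₂' : B')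
    (hB' : IsOreLoc ι' x₁' x₂' y₁' y₂')
    -- the algebra `A(q⁻¹,-α,μ)` and its localization `B''`
    {A'' : Type*} [Ring A''] [Algebra K A''] (x₁'' x₂'' x₃'' : A'')
    (hA'' : IsBiQuadRel q⁻¹ (-α) μ x₁'' x₂'' x₃'')
    {B'' : Type*} [Ring B''] [Algebra K B''] (ι'' : A'' →ₐ[K] B'') (y₁'' y₂'' : B'')
    (hB'' : IsOreLoc ι'' x₁'' x₂'' y₁'' y₂'') :
    (∃ φ : B ≃ₐ[K] B',
      φ (ι x₁) = ι' x₂' ∧ φ (ι x₂) = ι' x₁' ∧ φ (ι x₃) = ι' x₃')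
    ∧ (∃ ψ : B ≃ₐ[K] B'',
      ψ (ι x₁) = y₁'' ∧ ψ (ι x₂) = ι'' x₂'' ∧ ψ (ι x₃) = ι'' x₃'') := by
  exact statement7' q α μ hq0 hq1 hαμ x₁ x₂ x₃ hA ι y₁ y₂ hB x₁' x₂' x₃' hA' ι' y₁' y₂' hB'
    x₁'' x₂'' x₃'' hA'' ι'' y₁'' y₂'' hB''

end
end

section
/- A nonzero element a of A is a normal element of A (i.e. Aa = aA) if and only if a is an ω-weight vector, that is, there exist λ₁, λ₂, λ₃ ∈ K with ω_{x₁}(a) = λ₁a, ω_{x₂}(a) = λ₂a and x₃a − ax₃ = λ₃a. -/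
noncomputable section

variable {K : Type*} [Field K] {A : Type*} [Ring A] [Algebra K A]

/-- `A = A(q,α,μ)`: the defining relations of the bi-quadratic algebra of class II.1
together with the PBW-basis property
(`{x₁^{β₁} x₂^{β₂} x₃^{i}}` is a `K`-basis of `A`). -/
def IsBiQuad (q α μ : K) (x₁ x₂ x₃ : A) : Prop :=
  q ≠ 0 ∧ q ≠ 1 ∧
  ((α = 1 ∧ μ ≠ -1) ∨ (α = 0 ∧ μ = 1)) ∧
  x₂ * x₁ = algebraMap K A q * (x₁ * x₂) ∧
  x₃ * x₁ = x₁ * (x₃ + algebraMap K A α) ∧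
  x₃ * x₂ = x₂ * (x₃ + algebraMap K A μ) ∧
  ∀ a : A, ∃! f : ℕ × ℕ × ℕ →₀ K,
    a = f.sum fun v c => c • (x₁ ^ v.1 * x₂ ^ v.2.1 * x₃ ^ v.2.2)

/-- `q` is not a root of unity. -/
def NotRootOfUnity (q : K) : Prop := ∀ m : ℕ, 0 < m → q ^ m ≠ 1

/-- membership in the prime subfield `F_p` (when `char K = p > 0`). -/
def InPrimeSubfield (μ : K) : Prop := ∃ k : ℕ, μ = (k : K)

/-- membership in the copy of `ℚ` inside `K` (when `char K = 0`). -/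
def InRatSubfield (μ : K) : Prop := ∃ r : ℚ, μ = (r : K)

def CaseC1 (p : ℕ) (q : K) : Prop := NotRootOfUnity q ∧ p = 0

def CaseC2 (p : ℕ) (q α μ : K) : Prop :=
  NotRootOfUnity q ∧ 0 < p ∧
    ((α = 1 ∧ InPrimeSubfield μ ∧ μ ≠ -1) ∨ (α = 0 ∧ μ = 1))

def CaseC3 (p : ℕ) (q α μ : K) : Prop :=
  NotRootOfUnity q ∧ 0 < p ∧ α = 1 ∧ ¬ InPrimeSubfield μ

def CaseC4 (p n : ℕ) (q α μ : K) : Prop :=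
  0 < n ∧ IsPrimitiveRoot q n ∧ p = 0 ∧ α = 1 ∧ μ = 0

def CaseC5 (p n : ℕ) (q α μ : K) : Prop :=
  0 < n ∧ IsPrimitiveRoot q n ∧ p = 0 ∧ α = 0 ∧ μ = 1

def CaseC6 (p n μ₁ μ₂ : ℕ) (q α μ : K) : Prop :=
  0 < n ∧ IsPrimitiveRoot q n ∧ p = 0 ∧ α = 1 ∧
    0 < μ₁ ∧ 0 < μ₂ ∧ Nat.Coprime μ₁ μ₂ ∧ μ₁ ≠ μ₂ ∧ (μ₂ : K) * μ = -(μ₁ : K)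

def CaseC7a (p n μ₁ μ₂ : ℕ) (q α μ : K) : Prop :=
  0 < n ∧ IsPrimitiveRoot q n ∧ p = 0 ∧ α = 1 ∧
    0 < μ₁ ∧ 0 < μ₂ ∧ Nat.Coprime μ₁ μ₂ ∧ (μ₂ : K) * μ = (μ₁ : K)

def CaseC7b (p n : ℕ) (q α μ : K) : Prop :=
  0 < n ∧ IsPrimitiveRoot q n ∧ p = 0 ∧ α = 1 ∧ ¬ InRatSubfield μ

/-- case (C7): `μ ∉ ℚ_- ∪ {0}` (the union of cases (C7a) and (C7b)). -/
def CaseC7 (p n : ℕ) (q α μ : K) : Prop :=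
  0 < n ∧ IsPrimitiveRoot q n ∧ p = 0 ∧ α = 1 ∧
    ¬ (μ = 0 ∨ ∃ r : ℚ, r < 0 ∧ μ = (r : K))

def CaseC8 (p n : ℕ) (q α μ : K) : Prop :=
  0 < n ∧ IsPrimitiveRoot q n ∧ 0 < p ∧ ¬ p ∣ n ∧ α = 1 ∧ μ = 0

def CaseC9 (p n : ℕ) (q α μ : K) : Prop :=
  0 < n ∧ IsPrimitiveRoot q n ∧ 0 < p ∧ ¬ p ∣ n ∧ α = 0 ∧ μ = 1

def CaseC10 (p n : ℕ) (q α μ : K) : Prop :=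
  0 < n ∧ IsPrimitiveRoot q n ∧ 0 < p ∧ ¬ p ∣ n ∧ α = 1 ∧ ¬ InPrimeSubfield μ

def CaseC11 (p n : ℕ) (q α μ : K) : Prop :=
  0 < n ∧ IsPrimitiveRoot q n ∧ 0 < p ∧ ¬ p ∣ n ∧ α = 1 ∧
    InPrimeSubfield μ ∧ μ ≠ 0 ∧ μ ≠ -1

/-- `f_μ = ∏_{a,b ∈ F_p} (x₃ - a - bμ)`, as an element of `A`. -/
def fmuElt (p : ℕ) (μ : K) (x₃ : A) : A :=
  ((List.range p).map fun (a : ℕ) =>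
    ((List.range p).map fun (b : ℕ) =>
      x₃ - algebraMap K A ((a : K) + (b : K) * μ)).prod).prod

section BQdev
open Polynomial

structure BQ (K : Type*) [Field K] (A : Type*) [Ring A] [Algebra K A] where
  q : K
  α : K
  μ : K
  x₁ : A
  x₂ : A
  x₃ : A
  hq : q ≠ 0
  r21 : x₂ * x₁ = algebraMap K A q * (x₁ * x₂)
  r31 : x₃ * x₁ = x₁ * (x₃ + algebraMap K A α)
  r32 : x₃ * x₂ = x₂ * (x₃ + algebraMap K A μ)
  pbw : ∀ a : A, ∃! f : ℕ × ℕ × ℕ →₀ K,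
    a = f.sum fun v c => c • (x₁ ^ v.1 * x₂ ^ v.2.1 * x₃ ^ v.2.2)

namespace BQ

variable (S : BQ K A)

def m (v : ℕ × ℕ × ℕ) : A := S.x₁ ^ v.1 * S.x₂ ^ v.2.1 * S.x₃ ^ v.2.2

def T : (ℕ × ℕ × ℕ →₀ K) →ₗ[K] A := Finsupp.linearCombination K S.m

lemma T_apply (f : ℕ × ℕ × ℕ →₀ K) : S.T f = f.sum fun v c => c • S.m v :=
  Finsupp.linearCombination_apply K f

lemma T_bij : Function.Bijective S.T := by
  constructor
  · intro f g hfg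
    obtain ⟨f₀, _, hu⟩ := S.pbw (S.T f)
    have h1 : f = f₀ := hu f (S.T_apply f)
    have h2 : g = f₀ := hu g (by rw [hfg]; exact S.T_apply g)
    rw [h1, h2]
  · intro a
    obtain ⟨f₀, hf₀, _⟩ := S.pbw a
    exact ⟨f₀, by rw [T_apply]; exact hf₀.symm⟩

def equiv : (ℕ × ℕ × ℕ →₀ K) ≃ₗ[K] A := LinearEquiv.ofBijective S.T S.T_bij

def rep (a : A) : ℕ × ℕ × ℕ →₀ K := S.equiv.symm a

lemma T_rep (a : A) : S.T (S.rep a) = a := S.equiv.apply_symm_apply a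

lemma rep_T (f : ℕ × ℕ × ℕ →₀ K) : S.rep (S.T f) = f := S.equiv.symm_apply_apply f

def H (d : ℕ × ℕ) (p : K[X]) : A := S.x₁ ^ d.1 * S.x₂ ^ d.2 * aeval S.x₃ p

def ι (d : ℕ × ℕ) : ℕ ↪ ℕ × ℕ × ℕ := ⟨fun k => (d.1, d.2, k), by intro a b h; simpa using h⟩

lemma aeval_eq_sum (p : K[X]) : aeval S.x₃ p = p.sum fun k c => c • S.x₃ ^ k := by
  rw [aeval_def, eval₂_eq_sum, Polynomial.sum_def, Polynomial.sum_def]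
  exact Finset.sum_congr rfl fun n _ => (Algebra.smul_def _ _).symm

lemma rep_H (d : ℕ × ℕ) (p : K[X]) :
    S.rep (S.H d p) = Finsupp.embDomain (ι d) p.toFinsupp.coeff := by
  have key : S.T (Finsupp.embDomain (ι d) p.toFinsupp.coeff) = S.H d p := by
    rw [T_apply, Finsupp.sum_embDomain, H, S.aeval_eq_sum, Polynomial.sum_def, Finsupp.sum,
      Finset.mul_sum]
    exact Finset.sum_congr rfl fun k _ => (mul_smul_comm _ _ _).symm
  rw [← key, rep_T]

def P (d : ℕ × ℕ) : A →ₗ[K] K[X] where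
  toFun a := ⟨AddMonoidAlgebra.ofCoeff (Finsupp.comapDomain (fun k => (d.1, d.2, k)) (S.rep a)
      (Function.Injective.injOn (fun k l h => by simpa using h)))⟩
  map_add' a b := by
    apply Polynomial.ext; intro n
    show S.rep (a + b) (d.1, d.2, n) = (_ + _ : K[X]).coeff n
    rw [coeff_add]
    show _ = S.rep a (d.1, d.2, n) + S.rep b (d.1, d.2, n)
    rw [rep, rep, rep, map_add, Finsupp.add_apply]
  map_smul' c a := by
    apply Polynomial.ext; intro n
    show S.rep (c • a) (d.1, d.2, n) = (c • _ : K[X]).coeff n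
    rw [coeff_smul]
    show _ = c • S.rep a (d.1, d.2, n)
    rw [rep, rep, map_smul, Finsupp.smul_apply]

lemma P_coeff (d : ℕ × ℕ) (a : A) (k : ℕ) : (S.P d a).coeff k = S.rep a (d.1, d.2, k) := rfl

lemma P_H (d' d : ℕ × ℕ) (p : K[X]) : S.P d' (S.H d p) = if d' = d then p else 0 := by
  apply Polynomial.ext; intro k
  rw [P_coeff, rep_H]
  by_cases h : d' = d
  · subst h
    rw [if_pos rfl]
    exact Finsupp.embDomain_apply_self (ι d') p.toFinsupp.coeff k
  · rw [if_neg h, coeff_zero]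
    apply Finsupp.embDomain_notin_range
    rintro ⟨k', hk'⟩
    apply h
    have h1 : d.1 = d'.1 ∧ d.2 = d'.2 := by
      have := hk'
      change ((d.1, d.2, k') : ℕ × ℕ × ℕ) = (d'.1, d'.2, k) at this
      simp only [ι, Function.Embedding.coeFn_mk, Prod.mk.injEq] at this
      exact ⟨this.1, this.2.1⟩
    exact Prod.ext h1.1.symm h1.2.symm

def D (a : A) : Finset (ℕ × ℕ) := (S.rep a).support.image fun v => (v.1, v.2.1)

lemma mem_D {a : A} {d : ℕ × ℕ} : d ∈ S.D a ↔ S.P d a ≠ 0 := by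
  constructor
  · intro hd
    rw [D, Finset.mem_image] at hd
    obtain ⟨v, hv, rfl⟩ := hd
    intro h0
    have h1 : (S.P (v.1, v.2.1) a).coeff v.2.2 = 0 := by rw [h0]; simp
    rw [P_coeff] at h1
    exact Finsupp.mem_support_iff.mp hv h1
  · intro hP
    obtain ⟨k, hk⟩ : ∃ k, (S.P d a).coeff k ≠ 0 := by
      by_contra hcon; push_neg at hcon
      exact hP (Polynomial.ext fun k => by simpa using hcon k)
    rw [P_coeff] at hk
    rw [D, Finset.mem_image]
    exact ⟨(d.1, d.2, k), Finsupp.mem_support_iff.mpr hk, rfl⟩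

lemma eq_zero_of_P (a : A) (h : ∀ d, S.P d a = 0) : a = 0 := by
  have hrep : S.rep a = 0 := by
    apply Finsupp.ext; intro v
    have := congrArg (fun p => Polynomial.coeff p v.2.2) (h (v.1, v.2.1))
    simpa [P_coeff] using this
  have := congrArg S.T hrep
  rw [S.T_rep a, map_zero] at this
  exact this

lemma rep_H_apply (d : ℕ × ℕ) (p : K[X]) (v : ℕ × ℕ × ℕ) :
    S.rep (S.H d p) v = if (v.1, v.2.1) = d then p.coeff v.2.2 else 0 := by
  have h1 : S.rep (S.H d p) v = (S.P (v.1, v.2.1) (S.H d p)).coeff v.2.2 := rfl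
  rw [h1, P_H]
  by_cases h : (v.1, v.2.1) = d <;> simp [h]

lemma decomp (a : A) : a = ∑ d ∈ S.D a, S.H d (S.P d a) := by
  have hrep : S.rep (∑ d ∈ S.D a, S.H d (S.P d a)) = S.rep a := by
    apply Finsupp.ext; intro v
    have h1 : S.rep (∑ d ∈ S.D a, S.H d (S.P d a)) = ∑ d ∈ S.D a, S.rep (S.H d (S.P d a)) := by
      rw [rep, map_sum]; rfl
    rw [h1, Finsupp.finset_sum_apply]
    have h2 : ∀ d ∈ S.D a, S.rep (S.H d (S.P d a)) v
        = if (v.1, v.2.1) = d then (S.P d a).coeff v.2.2 else 0 := fun d _ => S.rep_H_apply ..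
    rw [Finset.sum_congr rfl h2]
    have h3 : (∑ d ∈ S.D a, if (v.1, v.2.1) = d then (S.P d a).coeff v.2.2 else 0)
        = if (v.1, v.2.1) ∈ S.D a then (S.P (v.1, v.2.1) a).coeff v.2.2 else 0 := by
      rw [← Finset.sum_ite_eq (S.D a) (v.1, v.2.1) (fun d => (S.P d a).coeff v.2.2)]
    rw [h3, P_coeff]
    by_cases hmem : (v.1, v.2.1) ∈ S.D a
    · rw [if_pos hmem]
    · rw [if_neg hmem]
      by_contra hne
      apply hmem
      rw [D, Finset.mem_image]
      exact ⟨v, Finsupp.mem_support_iff.mpr fun h => hne h.symm, rfl⟩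
  have := congrArg S.T hrep
  rw [S.T_rep, S.T_rep] at this
  exact this.symm


/-! ### Commutation lemmas -/

lemma x₃_mul_x₁_pow (i : ℕ) :
    S.x₃ * S.x₁ ^ i = S.x₁ ^ i * (S.x₃ + algebraMap K A ((i : K) * S.α)) := by
  induction i with
  | zero => simp
  | succ i ih =>
    have key : (S.x₃ + algebraMap K A ((i : K) * S.α)) * S.x₁
        = S.x₁ * (S.x₃ + algebraMap K A (((i + 1 : ℕ) : K) * S.α)) := by
      have hc : S.α + (i : K) * S.α = ((i + 1 : ℕ) : K) * S.α := by push_cast; ring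
      rw [add_mul, S.r31, Algebra.commutes ((i : K) * S.α) S.x₁, ← mul_add, add_assoc,
        ← map_add, hc]
    rw [pow_succ, ← mul_assoc, ih, mul_assoc, key, ← mul_assoc, ← pow_succ]

lemma x₃_pow_mul_x₁_pow (n i : ℕ) :
    S.x₃ ^ n * S.x₁ ^ i = S.x₁ ^ i * (S.x₃ + algebraMap K A ((i : K) * S.α)) ^ n := by
  induction n with
  | zero => simp
  | succ n ih =>
    rw [pow_succ, mul_assoc, S.x₃_mul_x₁_pow i, ← mul_assoc, ih, mul_assoc, ← pow_succ]

lemma x₃_mul_x₂_pow (j : ℕ) :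
    S.x₃ * S.x₂ ^ j = S.x₂ ^ j * (S.x₃ + algebraMap K A ((j : K) * S.μ)) := by
  induction j with
  | zero => simp
  | succ j ih =>
    have key : (S.x₃ + algebraMap K A ((j : K) * S.μ)) * S.x₂
        = S.x₂ * (S.x₃ + algebraMap K A (((j + 1 : ℕ) : K) * S.μ)) := by
      have hc : S.μ + (j : K) * S.μ = ((j + 1 : ℕ) : K) * S.μ := by push_cast; ring
      rw [add_mul, S.r32, Algebra.commutes ((j : K) * S.μ) S.x₂, ← mul_add, add_assoc,
        ← map_add, hc]
    rw [pow_succ, ← mul_assoc, ih, mul_assoc, key, ← mul_assoc, ← pow_succ]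

lemma x₃_pow_mul_x₂_pow (n j : ℕ) :
    S.x₃ ^ n * S.x₂ ^ j = S.x₂ ^ j * (S.x₃ + algebraMap K A ((j : K) * S.μ)) ^ n := by
  induction n with
  | zero => simp
  | succ n ih =>
    rw [pow_succ, mul_assoc, S.x₃_mul_x₂_pow j, ← mul_assoc, ih, mul_assoc, ← pow_succ]

lemma x₂_mul_x₁_pow (i : ℕ) :
    S.x₂ * S.x₁ ^ i = S.q ^ i • (S.x₁ ^ i * S.x₂) := by
  have r21' : S.x₂ * S.x₁ = S.q • (S.x₁ * S.x₂) := by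
    rw [S.r21, Algebra.smul_def]
  induction i with
  | zero => simp
  | succ i ih =>
    rw [pow_succ', ← mul_assoc, r21', smul_mul_assoc, mul_assoc, ih, mul_smul_comm,
      smul_smul, ← mul_assoc, ← pow_succ', ← pow_succ']

lemma x₂_pow_mul_x₁_pow (j i : ℕ) :
    S.x₂ ^ j * S.x₁ ^ i = S.q ^ (j * i) • (S.x₁ ^ i * S.x₂ ^ j) := by
  induction j with
  | zero => simp
  | succ j ih =>
    rw [pow_succ', mul_assoc, ih, mul_smul_comm, ← mul_assoc, S.x₂_mul_x₁_pow i,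
      smul_mul_assoc, smul_smul, ← pow_add, mul_assoc,
      show j * i + i = (j + 1) * i by ring]

lemma aeval_mul_x₁_pow (p : K[X]) (i : ℕ) :
    aeval S.x₃ p * S.x₁ ^ i
      = S.x₁ ^ i * aeval S.x₃ (p.comp (X + C ((i : K) * S.α))) := by
  induction p using Polynomial.induction_on' with
  | add p r hp hr => rw [map_add, add_mul, hp, hr, add_comp, map_add, mul_add]
  | monomial n c =>
    rw [aeval_monomial, mul_assoc, S.x₃_pow_mul_x₁_pow n i, ← mul_assoc,
      show algebraMap K A c * S.x₁ ^ i = S.x₁ ^ i * algebraMap K A c from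
        Algebra.commutes c (S.x₁ ^ i), mul_assoc]
    congr 1
    simp only [← C_mul_X_pow_eq_monomial, mul_comp, C_comp, pow_comp, X_comp, add_comp,
      map_mul, map_pow, map_add, aeval_C, aeval_X]

lemma aeval_mul_x₂_pow (p : K[X]) (j : ℕ) :
    aeval S.x₃ p * S.x₂ ^ j
      = S.x₂ ^ j * aeval S.x₃ (p.comp (X + C ((j : K) * S.μ))) := by
  induction p using Polynomial.induction_on' with
  | add p r hp hr => rw [map_add, add_mul, hp, hr, add_comp, map_add, mul_add]
  | monomial n c =>
    rw [aeval_monomial, mul_assoc, S.x₃_pow_mul_x₂_pow n j, ← mul_assoc,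
      show algebraMap K A c * S.x₂ ^ j = S.x₂ ^ j * algebraMap K A c from
        Algebra.commutes c (S.x₂ ^ j), mul_assoc]
    congr 1
    simp only [← C_mul_X_pow_eq_monomial, mul_comp, C_comp, pow_comp, X_comp, add_comp,
      map_mul, map_pow, map_add, aeval_C, aeval_X]


/-! ### The product formula -/

def sh (d : ℕ × ℕ) : K := (d.1 : K) * S.α + (d.2 : K) * S.μ

lemma aeval_mul_x₁_pow' (p : K[X]) (i : ℕ) (t : A) :
    aeval S.x₃ p * (S.x₁ ^ i * t)
      = S.x₁ ^ i * (aeval S.x₃ (p.comp (X + C ((i : K) * S.α))) * t) := by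
  rw [← mul_assoc, aeval_mul_x₁_pow, mul_assoc]

lemma aeval_mul_x₂_pow' (p : K[X]) (j : ℕ) (t : A) :
    aeval S.x₃ p * (S.x₂ ^ j * t)
      = S.x₂ ^ j * (aeval S.x₃ (p.comp (X + C ((j : K) * S.μ))) * t) := by
  rw [← mul_assoc, aeval_mul_x₂_pow, mul_assoc]

lemma x₂_pow_mul_x₁_pow' (j i : ℕ) (t : A) :
    S.x₂ ^ j * (S.x₁ ^ i * t) = S.q ^ (j * i) • (S.x₁ ^ i * (S.x₂ ^ j * t)) := by
  rw [← mul_assoc, x₂_pow_mul_x₁_pow, smul_mul_assoc, mul_assoc]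

lemma comp_comp (p : K[X]) (a b : K) :
    (p.comp (X + C a)).comp (X + C b) = p.comp (X + C (a + b)) := by
  rw [comp_assoc]
  congr 1
  rw [add_comp, X_comp, C_comp, add_assoc, ← C_add, add_comm b a]

lemma H_mul_H (d d' : ℕ × ℕ) (p p' : K[X]) :
    S.H d p * S.H d' p'
      = S.q ^ (d.2 * d'.1) • S.H (d + d') ((p.comp (X + C (S.sh d'))) * p') := by
  unfold H
  simp only [mul_assoc]
  rw [S.aeval_mul_x₁_pow' p d'.1, S.aeval_mul_x₂_pow' _ d'.2, comp_comp, ← map_mul,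
    S.x₂_pow_mul_x₁_pow' d.2 d'.1, mul_smul_comm, ← mul_assoc, ← mul_assoc, ← pow_add,
    mul_assoc, ← mul_assoc (S.x₂ ^ d.2), ← pow_add]
  simp only [Prod.fst_add, Prod.snd_add, sh, mul_assoc]

lemma P_mul (a c : A) (d'' : ℕ × ℕ) :
    S.P d'' (a * c) = ∑ d₁ ∈ S.D a, ∑ d₂ ∈ S.D c,
      if d'' = d₁ + d₂ then
        S.q ^ (d₁.2 * d₂.1) • ((S.P d₁ a).comp (X + C (S.sh d₂)) * S.P d₂ c) else 0 := by
  conv_lhs => rw [S.decomp a, S.decomp c]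
  rw [Finset.sum_mul_sum, map_sum]
  refine Finset.sum_congr rfl fun d₁ _ => ?_
  rw [map_sum]
  refine Finset.sum_congr rfl fun d₂ _ => ?_
  rw [H_mul_H, map_smul, P_H]
  split_ifs with h
  · rfl
  · rw [smul_zero]

lemma D_max {a : A} (ha : a ≠ 0) :
    ∃ e ∈ S.D a, ∀ e' ∈ S.D a, toLex e' ≤ toLex e := by
  have hne : (S.D a).Nonempty := by
    by_contra h
    apply ha
    apply S.eq_zero_of_P
    intro d
    by_contra hP
    exact h ⟨d, S.mem_D.mpr hP⟩
  exact Finset.exists_max_image _ toLex hne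

lemma D_min {a : A} (ha : a ≠ 0) :
    ∃ e ∈ S.D a, ∀ e' ∈ S.D a, toLex e ≤ toLex e' := by
  have hne : (S.D a).Nonempty := by
    by_contra h
    apply ha
    apply S.eq_zero_of_P
    intro d
    by_contra hP
    exact h ⟨d, S.mem_D.mpr hP⟩
  exact Finset.exists_min_image _ toLex hne

lemma comp_ne_zero {p : K[X]} (hp : p ≠ 0) (c : K) : p.comp (X + C c) ≠ 0 := by
  intro h
  apply hp
  have h2 : (p.comp (X + C c)).comp (X + C (-c)) = p := by
    rw [comp_comp, add_neg_cancel, C_0, add_zero, comp_X]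
  rw [← h2, h, zero_comp]

lemma P_mul_max {a c : A} {e d : ℕ × ℕ} (he : e ∈ S.D a) (hd : d ∈ S.D c)
    (hea : ∀ e' ∈ S.D a, toLex e' ≤ toLex e) (hdc : ∀ d' ∈ S.D c, toLex d' ≤ toLex d) :
    S.P (e + d) (a * c)
      = S.q ^ (e.2 * d.1) • ((S.P e a).comp (X + C (S.sh d)) * S.P d c) := by
  rw [P_mul]
  rw [Finset.sum_eq_single_of_mem e he ?_]
  · rw [Finset.sum_eq_single_of_mem d hd ?_]
    · rw [if_pos rfl]
    · intro d₂ _ hne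
      rw [if_neg]
      intro hEq
      exact hne (add_left_cancel hEq.symm)
  · intro d₁ h₁ hne
    apply Finset.sum_eq_zero
    intro d₂ h₂
    rw [if_neg]
    intro hEq
    have h1 : toLex d₁ + toLex d₂ = toLex e + toLex d := congrArg toLex hEq.symm
    have h4 : toLex e + toLex d ≤ toLex d₁ + toLex d := by
      calc toLex e + toLex d = toLex d₁ + toLex d₂ := h1.symm
        _ ≤ toLex d₁ + toLex d := add_le_add_right (hdc d₂ h₂) _
    exact hne (toLex.injective (le_antisymm (hea d₁ h₁) (le_of_add_le_add_right h4)))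

lemma P_mul_min {a c : A} {e d : ℕ × ℕ} (he : e ∈ S.D a) (hd : d ∈ S.D c)
    (hea : ∀ e' ∈ S.D a, toLex e ≤ toLex e') (hdc : ∀ d' ∈ S.D c, toLex d ≤ toLex d') :
    S.P (e + d) (a * c)
      = S.q ^ (e.2 * d.1) • ((S.P e a).comp (X + C (S.sh d)) * S.P d c) := by
  rw [P_mul]
  rw [Finset.sum_eq_single_of_mem e he ?_]
  · rw [Finset.sum_eq_single_of_mem d hd ?_]
    · rw [if_pos rfl]
    · intro d₂ _ hne
      rw [if_neg]
      intro hEq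
      exact hne (add_left_cancel hEq.symm)
  · intro d₁ h₁ hne
    apply Finset.sum_eq_zero
    intro d₂ h₂
    rw [if_neg]
    intro hEq
    have h1 : toLex d₁ + toLex d₂ = toLex e + toLex d := congrArg toLex hEq.symm
    have h4 : toLex d₁ + toLex d ≤ toLex e + toLex d := by
      calc toLex d₁ + toLex d ≤ toLex d₁ + toLex d₂ := add_le_add_right (hdc d₂ h₂) _
        _ = toLex e + toLex d := h1
    exact hne (toLex.injective (le_antisymm (le_of_add_le_add_right h4) (hea d₁ h₁)))

lemma P_mul_max_ne_zero {a c : A} {e d : ℕ × ℕ} (he : e ∈ S.D a) (hd : d ∈ S.D c)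
    (hea : ∀ e' ∈ S.D a, toLex e' ≤ toLex e) (hdc : ∀ d' ∈ S.D c, toLex d' ≤ toLex d) :
    S.P (e + d) (a * c) ≠ 0 := by
  rw [S.P_mul_max he hd hea hdc]
  exact smul_ne_zero (pow_ne_zero _ S.hq)
    (mul_ne_zero (comp_ne_zero (S.mem_D.mp he) _) (S.mem_D.mp hd))

include S in
lemma mul_ne_zero' {a c : A} (ha : a ≠ 0) (hc : c ≠ 0) : a * c ≠ 0 := by
  obtain ⟨e, he, hea⟩ := S.D_max ha
  obtain ⟨d, hd, hdc⟩ := S.D_max hc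
  intro h0
  have := S.P_mul_max_ne_zero he hd hea hdc
  rw [h0, map_zero] at this
  exact this rfl

include S in
lemma right_cancel {b : A} {x : A} (hx : x ≠ 0) (h : b * x = 0) : b = 0 := by
  by_contra hb
  exact S.mul_ne_zero' hb hx h


/-! ### Special component formulas -/

lemma H_zero (d : ℕ × ℕ) : S.H d 0 = 0 := by simp [H]

lemma D_H {d : ℕ × ℕ} {p : K[X]} (hp : p ≠ 0) : S.D (S.H d p) = {d} := by
  apply Finset.ext
  intro d'
  simp only [mem_D, P_H, Finset.mem_singleton]
  split_ifs with h
  · simp [h, hp]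
  · simp [h]

lemma x₁_eq : S.x₁ = S.H (1, 0) 1 := by simp [H]

lemma x₂_eq : S.x₂ = S.H (0, 1) 1 := by simp [H]

lemma x₃_eq : S.x₃ = S.H (0, 0) X := by simp [H]

lemma x₁_ne_zero : S.x₁ ≠ 0 := by
  intro h
  have h1 : S.P (1, 0) (S.H (1, 0) (1 : K[X])) = 1 := by rw [P_H, if_pos rfl]
  rw [← x₁_eq, h, map_zero] at h1
  exact one_ne_zero h1.symm

lemma x₂_ne_zero : S.x₂ ≠ 0 := by
  intro h
  have h1 : S.P (0, 1) (S.H (0, 1) (1 : K[X])) = 1 := by rw [P_H, if_pos rfl]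
  rw [← x₂_eq, h, map_zero] at h1
  exact one_ne_zero h1.symm

lemma H_mul_left (d₀ : ℕ × ℕ) (p₀ : K[X]) (hp₀ : p₀ ≠ 0) (c : A) (d'' : ℕ × ℕ) :
    S.P d'' (S.H d₀ p₀ * c) = ∑ d₂ ∈ S.D c,
      if d'' = d₀ + d₂ then
        S.q ^ (d₀.2 * d₂.1) • (p₀.comp (X + C (S.sh d₂)) * S.P d₂ c) else 0 := by
  rw [P_mul, S.D_H hp₀, Finset.sum_singleton]
  refine Finset.sum_congr rfl fun d₂ _ => ?_
  rw [P_H, if_pos rfl]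

lemma P_x₃_mul (a : A) (d : ℕ × ℕ) :
    S.P d (S.x₃ * a) = (X + C (S.sh d)) * S.P d a := by
  conv_lhs => rw [x₃_eq]
  rw [S.H_mul_left (0, 0) X X_ne_zero a d]
  have hsum : ∀ d₂ ∈ S.D a,
      (if d = (0, 0) + d₂ then
        S.q ^ ((0, 0).2 * d₂.1) • (X.comp (X + C (S.sh d₂)) * S.P d₂ a) else 0)
      = if d₂ = d then (X + C (S.sh d₂)) * S.P d₂ a else 0 := by
    intro d₂ _
    have h0 : ((0, 0) + d₂ : ℕ × ℕ) = d₂ := by ext <;> simp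
    rw [h0, X_comp]
    have h1 : S.q ^ ((0, 0).2 * d₂.1) = 1 := by norm_num
    rw [h1, one_smul]
    by_cases h : d₂ = d
    · rw [if_pos h.symm, if_pos h]
    · rw [if_neg (fun hh => h hh.symm), if_neg h]
  rw [Finset.sum_congr rfl hsum, Finset.sum_ite_eq' (S.D a) d _]
  by_cases hd : d ∈ S.D a
  · rw [if_pos hd]
  · rw [if_neg hd]
    have h2 : S.P d a = 0 := by
      by_contra h
      exact hd (S.mem_D.mpr h)
    rw [h2, mul_zero]

lemma P_x₁_mul (a : A) (d : ℕ × ℕ) :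
    S.P (d.1 + 1, d.2) (S.x₁ * a) = S.P d a := by
  conv_lhs => rw [x₁_eq]
  rw [S.H_mul_left (1, 0) 1 one_ne_zero a _]
  have hsum : ∀ d₂ ∈ S.D a,
      (if (d.1 + 1, d.2) = (1, 0) + d₂ then
        S.q ^ ((1, 0).2 * d₂.1) • ((1 : K[X]).comp (X + C (S.sh d₂)) * S.P d₂ a) else 0)
      = if d₂ = d then S.P d₂ a else 0 := by
    intro d₂ _
    have hcond : ((d.1 + 1, d.2) = (1, 0) + d₂) ↔ d₂ = d := by
      constructor
      · intro h
        have := Prod.ext_iff.mp h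
        simp only [Prod.fst_add, Prod.snd_add] at this
        ext
        · omega
        · omega
      · rintro rfl
        ext <;> simp [add_comm]
    rw [one_comp, one_mul]
    have h1 : S.q ^ ((1, 0).2 * d₂.1) = 1 := by norm_num
    rw [h1, one_smul]
    by_cases h : d₂ = d
    · rw [if_pos (hcond.mpr h), if_pos h]
    · rw [if_neg (fun hh => h (hcond.mp hh)), if_neg h]
  rw [Finset.sum_congr rfl hsum, Finset.sum_ite_eq' (S.D a) d _]
  by_cases hd : d ∈ S.D a
  · rw [if_pos hd]
  · rw [if_neg hd]
    have h2 : S.P d a = 0 := by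
      by_contra h
      exact hd (S.mem_D.mpr h)
    rw [h2]

lemma P_x₁_mul_zero (a : A) (j : ℕ) : S.P (0, j) (S.x₁ * a) = 0 := by
  conv_lhs => rw [x₁_eq]
  rw [S.H_mul_left (1, 0) 1 one_ne_zero a _]
  apply Finset.sum_eq_zero
  intro d₂ _
  rw [if_neg]
  intro h
  have := Prod.ext_iff.mp h
  simp only [Prod.fst_add, Prod.snd_add] at this
  omega

lemma P_x₂_mul (a : A) (d : ℕ × ℕ) :
    S.P (d.1, d.2 + 1) (S.x₂ * a) = S.q ^ d.1 • S.P d a := by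
  conv_lhs => rw [x₂_eq]
  rw [S.H_mul_left (0, 1) 1 one_ne_zero a _]
  have hsum : ∀ d₂ ∈ S.D a,
      (if (d.1, d.2 + 1) = (0, 1) + d₂ then
        S.q ^ ((0, 1).2 * d₂.1) • ((1 : K[X]).comp (X + C (S.sh d₂)) * S.P d₂ a) else 0)
      = if d₂ = d then S.q ^ d.1 • S.P d₂ a else 0 := by
    intro d₂ _
    have hcond : ((d.1, d.2 + 1) = (0, 1) + d₂) ↔ d₂ = d := by
      constructor
      · intro h
        have := Prod.ext_iff.mp h
        simp only [Prod.fst_add, Prod.snd_add] at this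
        ext
        · omega
        · omega
      · rintro rfl
        ext <;> simp [add_comm]
    rw [one_comp, one_mul]
    by_cases h : d₂ = d
    · rw [if_pos (hcond.mpr h), if_pos h, h]
      norm_num
    · rw [if_neg (fun hh => h (hcond.mp hh)), if_neg h]
  rw [Finset.sum_congr rfl hsum, Finset.sum_ite_eq' (S.D a) d _]
  by_cases hd : d ∈ S.D a
  · rw [if_pos hd]
  · rw [if_neg hd]
    have h2 : S.P d a = 0 := by
      by_contra h
      exact hd (S.mem_D.mpr h)
    rw [h2, smul_zero]

lemma P_x₂_mul_zero (a : A) (i : ℕ) : S.P (i, 0) (S.x₂ * a) = 0 := by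
  conv_lhs => rw [x₂_eq]
  rw [S.H_mul_left (0, 1) 1 one_ne_zero a _]
  apply Finset.sum_eq_zero
  intro d₂ _
  rw [if_neg]
  intro h
  have := Prod.ext_iff.mp h
  simp only [Prod.fst_add, Prod.snd_add] at this
  omega

lemma P_mul_H (a : A) (d₀ : ℕ × ℕ) (p : K[X]) (d : ℕ × ℕ) :
    S.P (d + d₀) (a * S.H d₀ p)
      = S.q ^ (d.2 * d₀.1) • ((S.P d a).comp (X + C (S.sh d₀)) * p) := by
  by_cases hp : p = 0
  · subst hp
    rw [H_zero, mul_zero, map_zero, mul_zero, smul_zero]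
  rw [P_mul, ]
  have hsum : ∀ d₁ ∈ S.D a,
      (∑ d₂ ∈ S.D (S.H d₀ p), if d + d₀ = d₁ + d₂ then
        S.q ^ (d₁.2 * d₂.1) • ((S.P d₁ a).comp (X + C (S.sh d₂)) * S.P d₂ (S.H d₀ p)) else 0)
      = if d₁ = d then S.q ^ (d.2 * d₀.1) • ((S.P d a).comp (X + C (S.sh d₀)) * p) else 0 := by
    intro d₁ _
    rw [S.D_H hp, Finset.sum_singleton, P_H, if_pos rfl]
    by_cases h : d₁ = d
    · subst h
      rw [if_pos rfl, if_pos rfl]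
    · rw [if_neg, if_neg h]
      intro hh
      exact h (add_right_cancel hh).symm
  rw [Finset.sum_congr rfl hsum, Finset.sum_ite_eq' (S.D a) d _]
  by_cases hd : d ∈ S.D a
  · rw [if_pos hd]
  · rw [if_neg hd]
    have h2 : S.P d a = 0 := by
      by_contra h
      exact hd (S.mem_D.mpr h)
    rw [h2, zero_comp, zero_mul, smul_zero]


/-! ### Auxiliary facts for the main theorem -/

lemma P_mul_min_ne_zero {a c : A} {e d : ℕ × ℕ} (he : e ∈ S.D a) (hd : d ∈ S.D c)
    (hea : ∀ e' ∈ S.D a, toLex e ≤ toLex e') (hdc : ∀ d' ∈ S.D c, toLex d ≤ toLex d') :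
    S.P (e + d) (a * c) ≠ 0 := by
  rw [S.P_mul_min he hd hea hdc]
  exact smul_ne_zero (pow_ne_zero _ S.hq)
    (mul_ne_zero (comp_ne_zero (S.mem_D.mp he) _) (S.mem_D.mp hd))

lemma zero_le_lex (d : ℕ × ℕ) : (0 : ℕ ×ₗ ℕ) ≤ toLex d := by
  rcases d with ⟨a, b⟩
  rcases Nat.eq_zero_or_pos a with h | h
  · subst h
    rw [show (0 : ℕ ×ₗ ℕ) = toLex ((0 : ℕ), (0 : ℕ)) from rfl, Prod.Lex.le_iff]
    right
    exact ⟨rfl, Nat.zero_le b⟩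
  · rw [show (0 : ℕ ×ₗ ℕ) = toLex ((0 : ℕ), (0 : ℕ)) from rfl, Prod.Lex.le_iff]
    left
    exact h

lemma H_sub (d : ℕ × ℕ) (p p' : K[X]) : S.H d p - S.H d p' = S.H d (p - p') := by
  simp [H, map_sub, mul_sub]

lemma H_C (c : K) : S.H (0, 0) (C c) = algebraMap K A c := by
  simp [H, aeval_C]

lemma H_10_C (c : K) : S.H (1, 0) (C c) = c • S.x₁ := by
  simp only [H, pow_one, pow_zero, mul_one, aeval_C]
  rw [← Algebra.commutes, ← Algebra.smul_def]

lemma H_01_C (c : K) : S.H (0, 1) (C c) = c • S.x₂ := by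
  simp only [H, pow_one, pow_zero, one_mul, aeval_C]
  rw [← Algebra.commutes, ← Algebra.smul_def]

lemma P_zero_of_not_mem {a : A} {d : ℕ × ℕ} (h : d ∉ S.D a) : S.P d a = 0 := by
  by_contra hP
  exact h (S.mem_D.mpr hP)

/-! ### Main theorem -/

include S in
theorem main (σ₁ σ₂ : A ≃ₐ[K] A)
    (hσ₁ : ∀ r : A, S.x₁ * r = σ₁ r * S.x₁)
    (hσ₂ : ∀ r : A, S.x₂ * r = σ₂ r * S.x₂) :
    ∀ a : A, a ≠ 0 →
      (({y : A | ∃ x : A, y = x * a} = {y : A | ∃ x : A, y = a * x}) ↔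
        ∃ l₁ l₂ l₃ : K,
          σ₁ a = l₁ • a ∧ σ₂ a = l₂ • a ∧ S.x₃ * a - a * S.x₃ = l₃ • a) := by
  intro a ha
  constructor
  · -- forward: normal ⇒ weight vector
    intro h
    have hR : ∀ x : A, ∃ u : A, x * a = a * u := by
      intro x
      have hx : (x * a) ∈ {y : A | ∃ x : A, y = x * a} := ⟨x, rfl⟩
      rw [h] at hx
      exact hx
    obtain ⟨e, heD, hemax⟩ := S.D_max ha
    obtain ⟨em, hemD, hemin⟩ := S.D_min ha
    have hfe : S.P e a ≠ 0 := S.mem_D.mp heD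
    -- ========== the l₃ part ==========
    obtain ⟨c₃, hc₃⟩ := hR S.x₃
    have hx₃a : S.x₃ * a ≠ 0 := by
      intro h0
      apply ha
      apply S.eq_zero_of_P
      intro d
      have h1 := congrArg (S.P d) h0
      rw [S.P_x₃_mul, map_zero] at h1
      exact (mul_eq_zero.mp h1).resolve_left (X_add_C_ne_zero _)
    have hc₃0 : c₃ ≠ 0 := by
      rintro rfl
      rw [mul_zero] at hc₃
      exact hx₃a hc₃
    obtain ⟨dm, hdmD, hdmax⟩ := S.D_max hc₃0
    have hdm : ∀ d' ∈ S.D c₃, d' = ((0 : ℕ), (0 : ℕ)) := by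
      have h1 : S.P (e + dm) (a * c₃) ≠ 0 := S.P_mul_max_ne_zero heD hdmD hemax hdmax
      rw [← hc₃] at h1
      have h2 : S.P (e + dm) a ≠ 0 := by
        rw [S.P_x₃_mul] at h1
        intro h0
        rw [h0, mul_zero] at h1
        exact h1 rfl
      have h3 : toLex (e + dm) ≤ toLex e := hemax _ (S.mem_D.mpr h2)
      have h4 : toLex dm ≤ (0 : ℕ ×ₗ ℕ) := by
        have h5 : toLex e + toLex dm ≤ toLex e + 0 := by
          rw [add_zero]
          exact h3
        exact le_of_add_le_add_left h5
      intro d' hd'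
      exact toLex.injective (le_antisymm (le_trans (hdmax d' hd') h4) (zero_le_lex d'))
    have hDc₃ : S.D c₃ = {((0 : ℕ), (0 : ℕ))} := by
      apply Finset.ext
      intro d'
      simp only [Finset.mem_singleton]
      constructor
      · exact hdm d'
      · rintro rfl
        exact (hdm dm hdmD) ▸ hdmD
    have hc₃form : c₃ = S.H (0, 0) (S.P (0, 0) c₃) := by
      conv_lhs => rw [S.decomp c₃]
      rw [hDc₃, Finset.sum_singleton]
    set p := S.P (0, 0) c₃ with hpdef
    have he00 : (e + ((0 : ℕ), (0 : ℕ)) : ℕ × ℕ) = e := by ext <;> simp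
    have heq : (X + C (S.sh e)) * S.P e a = S.P e a * p := by
      have h1 := congrArg (S.P e) hc₃
      rw [S.P_x₃_mul] at h1
      have h2 : S.P e (a * S.H (0, 0) p) = S.P e a * p := by
        have h3 := S.P_mul_H a (0, 0) p e
        rw [he00] at h3
        have hsh0 : S.sh ((0 : ℕ), (0 : ℕ)) = 0 := by simp [sh]
        rw [hsh0, C_0, add_zero, comp_X] at h3
        simpa using h3
      rw [hc₃form] at h1
      rw [h1, h2]
    have hp : p = X + C (S.sh e) := by
      rw [mul_comm (S.P e a) p] at heq
      exact (mul_right_cancel₀ hfe heq).symm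
    have hl₃ : S.x₃ * a - a * S.x₃ = (S.sh e) • a := by
      calc S.x₃ * a - a * S.x₃
          = a * S.H (0, 0) (X + C (S.sh e)) - a * S.H (0, 0) X := by
            rw [hc₃, hc₃form, hp, ← x₃_eq]
        _ = a * (S.H (0, 0) (X + C (S.sh e)) - S.H (0, 0) X) := by rw [mul_sub]
        _ = a * S.H (0, 0) (C (S.sh e)) := by rw [H_sub, add_sub_cancel_left]
        _ = a * algebraMap K A (S.sh e) := by rw [H_C]
        _ = (S.sh e) • a := by rw [← Algebra.commutes, ← Algebra.smul_def]
    -- ========== the l₁ part ==========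
    obtain ⟨c₁, hc₁⟩ := hR S.x₁
    have hx₁a : S.x₁ * a ≠ 0 := by
      intro h0
      have h1 := congrArg (S.P (e.1 + 1, e.2)) h0
      rw [S.P_x₁_mul, map_zero] at h1
      exact hfe h1
    have hc₁0 : c₁ ≠ 0 := by
      rintro rfl
      rw [mul_zero] at hc₁
      exact hx₁a hc₁
    have hDx₁ : ∀ d'' : ℕ × ℕ, S.P d'' (S.x₁ * a) ≠ 0 →
        ∃ e', e' ∈ S.D a ∧ d'' = e' + (1, 0) := by
      rintro ⟨i'', j''⟩ hne
      cases i'' with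
      | zero => exact absurd (S.P_x₁_mul_zero a j'') hne
      | succ t =>
        rw [show ((t + 1 : ℕ), j'') = ((t, j'').1 + 1, (t, j'').2) from rfl, S.P_x₁_mul] at hne
        exact ⟨(t, j''), S.mem_D.mpr hne, by ext <;> simp⟩
    obtain ⟨d₁M, hd₁MD, hd₁max⟩ := S.D_max hc₁0
    obtain ⟨d₁m, hd₁mD, hd₁min⟩ := S.D_min hc₁0
    have hmax1 : toLex d₁M ≤ toLex ((1, 0) : ℕ × ℕ) := by
      have h1 : S.P (e + d₁M) (a * c₁) ≠ 0 := S.P_mul_max_ne_zero heD hd₁MD hemax hd₁max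
      rw [← hc₁] at h1
      obtain ⟨e', he', hee⟩ := hDx₁ _ h1
      have h2 : toLex e + toLex d₁M = toLex e' + toLex ((1, 0) : ℕ × ℕ) := congrArg toLex hee
      have h3 : toLex e + toLex d₁M ≤ toLex e + toLex ((1, 0) : ℕ × ℕ) := by
        rw [h2]
        exact add_le_add_left (hemax e' he') _
      exact le_of_add_le_add_left h3
    have hmin1 : toLex ((1, 0) : ℕ × ℕ) ≤ toLex d₁m := by
      have h1 : S.P (em + d₁m) (a * c₁) ≠ 0 := S.P_mul_min_ne_zero hemD hd₁mD hemin hd₁min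
      rw [← hc₁] at h1
      obtain ⟨e', he', hee⟩ := hDx₁ _ h1
      have h2 : toLex em + toLex d₁m = toLex e' + toLex ((1, 0) : ℕ × ℕ) := congrArg toLex hee
      have h3 : toLex em + toLex ((1, 0) : ℕ × ℕ) ≤ toLex em + toLex d₁m := by
        rw [h2]
        exact add_le_add_left (hemin e' he') _
      exact le_of_add_le_add_left h3
    have hDc₁ : S.D c₁ = {((1 : ℕ), (0 : ℕ))} := by
      apply Finset.ext
      intro d'
      simp only [Finset.mem_singleton]
      constructor
      · intro hd'
        exact toLex.injective (le_antisymm (le_trans (hd₁max d' hd') hmax1)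
          (le_trans hmin1 (hd₁min d' hd')))
      · rintro rfl
        have hh : d₁M = ((1 : ℕ), (0 : ℕ)) :=
          toLex.injective (le_antisymm hmax1 (le_trans hmin1 (hd₁min d₁M hd₁MD)))
        exact hh ▸ hd₁MD
    have hc₁form : c₁ = S.H (1, 0) (S.P (1, 0) c₁) := by
      conv_lhs => rw [S.decomp c₁]
      rw [hDc₁, Finset.sum_singleton]
    set g := S.P (1, 0) c₁ with hgdef
    have hgne : g ≠ 0 :=
      S.mem_D.mp (by rw [hDc₁]; exact Finset.mem_singleton_self _)
    have heq1 : S.P e a = S.q ^ e.2 • ((S.P e a).comp (X + C S.α) * g) := by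
      have h1 := congrArg (S.P (e + (1, 0))) hc₁
      have h2 : S.P (e + (1, 0)) (S.x₁ * a) = S.P e a := by
        have hee : (e + ((1, 0) : ℕ × ℕ)) = (e.1 + 1, e.2) := by ext <;> simp
        rw [hee, S.P_x₁_mul]
      have h3 : S.P (e + (1, 0)) (a * c₁)
          = S.q ^ (e.2 * 1) • ((S.P e a).comp (X + C (S.sh (1, 0))) * g) := by
        conv_lhs => rw [hc₁form]
        exact S.P_mul_H a (1, 0) g e
      rw [h2, h3] at h1
      have hsh : S.sh ((1 : ℕ), (0 : ℕ)) = S.α := by simp [sh]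
      rw [hsh, mul_one] at h1
      exact h1
    have hdeg : g.natDegree = 0 := by
      have h4 := congrArg natDegree heq1
      rw [smul_eq_C_mul, natDegree_C_mul (pow_ne_zero _ S.hq),
        natDegree_mul (comp_ne_zero hfe _) hgne, natDegree_comp, natDegree_X_add_C,
        mul_one] at h4
      omega
    have hl₁C : g = C (g.coeff 0) := eq_C_of_natDegree_eq_zero hdeg
    have hl₁ : σ₁ a = (g.coeff 0) • a := by
      have hx₁aeq : S.x₁ * a = (g.coeff 0) • (a * S.x₁) := by
        rw [hc₁, hc₁form, hl₁C, H_10_C, mul_smul_comm, coeff_C_zero]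
      have h5 : (σ₁ a - (g.coeff 0) • a) * S.x₁ = 0 := by
        rw [sub_mul, ← hσ₁ a, hx₁aeq, smul_mul_assoc]
        exact sub_self _
      exact sub_eq_zero.mp (S.right_cancel S.x₁_ne_zero h5)
    -- ========== the l₂ part ==========
    obtain ⟨c₂, hc₂⟩ := hR S.x₂
    have hx₂a : S.x₂ * a ≠ 0 := by
      intro h0
      have h1 := congrArg (S.P (e.1, e.2 + 1)) h0
      rw [S.P_x₂_mul, map_zero] at h1
      exact hfe (by
        have := smul_eq_zero.mp h1
        rcases this with h | h
        · exact absurd h (pow_ne_zero _ S.hq)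
        · exact h)
    have hc₂0 : c₂ ≠ 0 := by
      rintro rfl
      rw [mul_zero] at hc₂
      exact hx₂a hc₂
    have hDx₂ : ∀ d'' : ℕ × ℕ, S.P d'' (S.x₂ * a) ≠ 0 →
        ∃ e', e' ∈ S.D a ∧ d'' = e' + (0, 1) := by
      rintro ⟨i'', j''⟩ hne
      cases j'' with
      | zero => exact absurd (S.P_x₂_mul_zero a i'') hne
      | succ t =>
        rw [show (i'', (t + 1 : ℕ)) = ((i'', t).1, (i'', t).2 + 1) from rfl, S.P_x₂_mul] at hne
        have hP : S.P (i'', t) a ≠ 0 := by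
          intro h0
          rw [h0, smul_zero] at hne
          exact hne rfl
        exact ⟨(i'', t), S.mem_D.mpr hP, by ext <;> simp⟩
    obtain ⟨d₂M, hd₂MD, hd₂max⟩ := S.D_max hc₂0
    obtain ⟨d₂m, hd₂mD, hd₂min⟩ := S.D_min hc₂0
    have hmax2 : toLex d₂M ≤ toLex ((0, 1) : ℕ × ℕ) := by
      have h1 : S.P (e + d₂M) (a * c₂) ≠ 0 := S.P_mul_max_ne_zero heD hd₂MD hemax hd₂max
      rw [← hc₂] at h1
      obtain ⟨e', he', hee⟩ := hDx₂ _ h1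
      have h2 : toLex e + toLex d₂M = toLex e' + toLex ((0, 1) : ℕ × ℕ) := congrArg toLex hee
      have h3 : toLex e + toLex d₂M ≤ toLex e + toLex ((0, 1) : ℕ × ℕ) := by
        rw [h2]
        exact add_le_add_left (hemax e' he') _
      exact le_of_add_le_add_left h3
    have hmin2 : toLex ((0, 1) : ℕ × ℕ) ≤ toLex d₂m := by
      have h1 : S.P (em + d₂m) (a * c₂) ≠ 0 := S.P_mul_min_ne_zero hemD hd₂mD hemin hd₂min
      rw [← hc₂] at h1
      obtain ⟨e', he', hee⟩ := hDx₂ _ h1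
      have h2 : toLex em + toLex d₂m = toLex e' + toLex ((0, 1) : ℕ × ℕ) := congrArg toLex hee
      have h3 : toLex em + toLex ((0, 1) : ℕ × ℕ) ≤ toLex em + toLex d₂m := by
        rw [h2]
        exact add_le_add_left (hemin e' he') _
      exact le_of_add_le_add_left h3
    have hDc₂ : S.D c₂ = {((0 : ℕ), (1 : ℕ))} := by
      apply Finset.ext
      intro d'
      simp only [Finset.mem_singleton]
      constructor
      · intro hd'
        exact toLex.injective (le_antisymm (le_trans (hd₂max d' hd') hmax2)
          (le_trans hmin2 (hd₂min d' hd')))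
      · rintro rfl
        have hh : d₂M = ((0 : ℕ), (1 : ℕ)) :=
          toLex.injective (le_antisymm hmax2 (le_trans hmin2 (hd₂min d₂M hd₂MD)))
        exact hh ▸ hd₂MD
    have hc₂form : c₂ = S.H (0, 1) (S.P (0, 1) c₂) := by
      conv_lhs => rw [S.decomp c₂]
      rw [hDc₂, Finset.sum_singleton]
    set g₂ := S.P (0, 1) c₂ with hg₂def
    have hg₂ne : g₂ ≠ 0 :=
      S.mem_D.mp (by rw [hDc₂]; exact Finset.mem_singleton_self _)
    have heq2 : S.q ^ e.1 • S.P e a = (S.P e a).comp (X + C S.μ) * g₂ := by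
      have h1 := congrArg (S.P (e + (0, 1))) hc₂
      have h2 : S.P (e + (0, 1)) (S.x₂ * a) = S.q ^ e.1 • S.P e a := by
        have hee : (e + ((0, 1) : ℕ × ℕ)) = (e.1, e.2 + 1) := by ext <;> simp
        rw [hee, S.P_x₂_mul]
      have h3 : S.P (e + (0, 1)) (a * c₂)
          = S.q ^ (e.2 * 0) • ((S.P e a).comp (X + C (S.sh (0, 1))) * g₂) := by
        conv_lhs => rw [hc₂form]
        exact S.P_mul_H a (0, 1) g₂ e
      rw [h2, h3] at h1
      have hsh : S.sh ((0 : ℕ), (1 : ℕ)) = S.μ := by simp [sh]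
      rw [hsh] at h1
      simpa using h1
    have hdeg2 : g₂.natDegree = 0 := by
      have h4 := congrArg natDegree heq2
      rw [smul_eq_C_mul, natDegree_C_mul (pow_ne_zero _ S.hq),
        natDegree_mul (comp_ne_zero hfe _) hg₂ne, natDegree_comp, natDegree_X_add_C,
        mul_one] at h4
      omega
    have hl₂C : g₂ = C (g₂.coeff 0) := eq_C_of_natDegree_eq_zero hdeg2
    have hl₂ : σ₂ a = (g₂.coeff 0) • a := by
      have hx₂aeq : S.x₂ * a = (g₂.coeff 0) • (a * S.x₂) := by
        rw [hc₂, hc₂form, hl₂C, H_01_C, mul_smul_comm, coeff_C_zero]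
      have h5 : (σ₂ a - (g₂.coeff 0) • a) * S.x₂ = 0 := by
        rw [sub_mul, ← hσ₂ a, hx₂aeq, smul_mul_assoc]
        exact sub_self _
      exact sub_eq_zero.mp (S.right_cancel S.x₂_ne_zero h5)
    exact ⟨g.coeff 0, g₂.coeff 0, S.sh e, hl₁, hl₂, hl₃⟩
  · -- backward: weight vector ⇒ normal
    rintro ⟨l₁, l₂, l₃, h1, h2, h3⟩
    have hl₁ : l₁ ≠ 0 := by
      rintro rfl
      rw [zero_smul] at h1
      exact ha (σ₁.injective (h1.trans (map_zero σ₁).symm))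
    have hl₂ : l₂ ≠ 0 := by
      rintro rfl
      rw [zero_smul] at h2
      exact ha (σ₂.injective (h2.trans (map_zero σ₂).symm))
    have hx₁a : S.x₁ * a = a * (l₁ • S.x₁) := by
      rw [hσ₁ a, h1, smul_mul_assoc, ← mul_smul_comm]
    have hx₂a : S.x₂ * a = a * (l₂ • S.x₂) := by
      rw [hσ₂ a, h2, smul_mul_assoc, ← mul_smul_comm]
    have hx₃a : S.x₃ * a = a * (S.x₃ + algebraMap K A l₃) := by
      have h4 : S.x₃ * a = a * S.x₃ + l₃ • a := by
        rw [← h3]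
        abel
      rw [h4, mul_add]
      congr 1
      rw [← Algebra.commutes, ← Algebra.smul_def]
    have hax₁ : a * S.x₁ = (l₁⁻¹ • S.x₁) * a := by
      rw [smul_mul_assoc]
      have h5 : l₁⁻¹ • (S.x₁ * a) = l₁⁻¹ • (l₁ • (a * S.x₁)) := by
        rw [hx₁a, mul_smul_comm]
      rw [smul_smul, inv_mul_cancel₀ hl₁, one_smul] at h5
      rw [← h5]
    have hax₂ : a * S.x₂ = (l₂⁻¹ • S.x₂) * a := by
      rw [smul_mul_assoc]
      have h5 : l₂⁻¹ • (S.x₂ * a) = l₂⁻¹ • (l₂ • (a * S.x₂)) := by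
        rw [hx₂a, mul_smul_comm]
      rw [smul_smul, inv_mul_cancel₀ hl₂, one_smul] at h5
      rw [← h5]
    have hax₃ : a * S.x₃ = (S.x₃ - algebraMap K A l₃) * a := by
      rw [sub_mul]
      have h6 : algebraMap K A l₃ * a = l₃ • a := (Algebra.smul_def l₃ a).symm
      rw [h6, ← h3]
      abel
    -- right-side closure
    have hmonoR : ∀ v : ℕ × ℕ × ℕ, ∃ u, S.m v * a = a * u := by
      have hpow₁ : ∀ i : ℕ, ∃ u, S.x₁ ^ i * a = a * u := by
        intro i
        induction i with
        | zero => exact ⟨1, by simp⟩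
        | succ i ih =>
          obtain ⟨u, hu⟩ := ih
          refine ⟨(l₁ • S.x₁) * u, ?_⟩
          rw [pow_succ', mul_assoc, hu, ← mul_assoc, hx₁a, mul_assoc]
      have hpow₂ : ∀ j : ℕ, ∃ u, S.x₂ ^ j * a = a * u := by
        intro j
        induction j with
        | zero => exact ⟨1, by simp⟩
        | succ j ih =>
          obtain ⟨u, hu⟩ := ih
          refine ⟨(l₂ • S.x₂) * u, ?_⟩
          rw [pow_succ', mul_assoc, hu, ← mul_assoc, hx₂a, mul_assoc]
      have hpow₃ : ∀ k : ℕ, ∃ u, S.x₃ ^ k * a = a * u := by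
        intro k
        induction k with
        | zero => exact ⟨1, by simp⟩
        | succ k ih =>
          obtain ⟨u, hu⟩ := ih
          refine ⟨(S.x₃ + algebraMap K A l₃) * u, ?_⟩
          rw [pow_succ', mul_assoc, hu, ← mul_assoc, hx₃a, mul_assoc]
      have hmulR : ∀ b b' : A, (∃ u, b * a = a * u) → (∃ u, b' * a = a * u) →
          (∃ u, (b * b') * a = a * u) := by
        rintro b b' ⟨u, hu⟩ ⟨u', hu'⟩
        refine ⟨u * u', ?_⟩
        rw [mul_assoc, hu', ← mul_assoc, hu, mul_assoc]
      rintro ⟨i, j, k⟩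
      exact hmulR _ _ (hmulR _ _ (hpow₁ i) (hpow₂ j)) (hpow₃ k)
    have hmonoL : ∀ v : ℕ × ℕ × ℕ, ∃ u, a * S.m v = u * a := by
      have hpow₁ : ∀ i : ℕ, ∃ u, a * S.x₁ ^ i = u * a := by
        intro i
        induction i with
        | zero => exact ⟨1, by simp⟩
        | succ i ih =>
          obtain ⟨u, hu⟩ := ih
          refine ⟨u * (l₁⁻¹ • S.x₁), ?_⟩
          rw [pow_succ, ← mul_assoc, hu, mul_assoc, hax₁, ← mul_assoc]
      have hpow₂ : ∀ j : ℕ, ∃ u, a * S.x₂ ^ j = u * a := by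
        intro j
        induction j with
        | zero => exact ⟨1, by simp⟩
        | succ j ih =>
          obtain ⟨u, hu⟩ := ih
          refine ⟨u * (l₂⁻¹ • S.x₂), ?_⟩
          rw [pow_succ, ← mul_assoc, hu, mul_assoc, hax₂, ← mul_assoc]
      have hpow₃ : ∀ k : ℕ, ∃ u, a * S.x₃ ^ k = u * a := by
        intro k
        induction k with
        | zero => exact ⟨1, by simp⟩
        | succ k ih =>
          obtain ⟨u, hu⟩ := ih
          refine ⟨u * (S.x₃ - algebraMap K A l₃), ?_⟩
          rw [pow_succ, ← mul_assoc, hu, mul_assoc, hax₃, ← mul_assoc]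
      have hmulL : ∀ b b' : A, (∃ u, a * b = u * a) → (∃ u, a * b' = u * a) →
          (∃ u, a * (b * b') = u * a) := by
        rintro b b' ⟨u, hu⟩ ⟨u', hu'⟩
        refine ⟨u * u', ?_⟩
        rw [← mul_assoc, hu, mul_assoc, hu', ← mul_assoc]
      rintro ⟨i, j, k⟩
      exact hmulL _ _ (hmulL _ _ (hpow₁ i) (hpow₂ j)) (hpow₃ k)
    have hRight : ∀ b : A, ∃ u, b * a = a * u := by
      intro b
      choose w hw using hmonoR
      refine ⟨(S.rep b).sum fun v c => c • w v, ?_⟩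
      conv_lhs => rw [← S.T_rep b, T_apply]
      rw [Finsupp.sum, Finsupp.sum, Finset.sum_mul, Finset.mul_sum]
      refine Finset.sum_congr rfl fun v _ => ?_
      rw [smul_mul_assoc, hw v, mul_smul_comm]
    have hLeft : ∀ b : A, ∃ u, a * b = u * a := by
      intro b
      choose w hw using hmonoL
      refine ⟨(S.rep b).sum fun v c => c • w v, ?_⟩
      conv_lhs => rw [← S.T_rep b, T_apply]
      rw [Finsupp.sum, Finsupp.sum, Finset.mul_sum, Finset.sum_mul]
      refine Finset.sum_congr rfl fun v _ => ?_
      rw [mul_smul_comm, hw v, smul_mul_assoc]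
    apply Set.ext
    intro y
    constructor
    · rintro ⟨x, rfl⟩
      obtain ⟨u, hu⟩ := hRight x
      exact ⟨u, hu⟩
    · rintro ⟨x, rfl⟩
      obtain ⟨u, hu⟩ := hLeft x
      exact ⟨u, hu⟩

end BQ



end BQdev

theorem statement19 (q α μ : K) (x₁ x₂ x₃ : A)
    (hbq : IsBiQuad q α μ x₁ x₂ x₃)
    (σ₁ σ₂ : A ≃ₐ[K] A)
    (hσ₁ : ∀ r : A, x₁ * r = σ₁ r * x₁)
    (hσ₂ : ∀ r : A, x₂ * r = σ₂ r * x₂) :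
    ∀ a : A, a ≠ 0 →
      (({y : A | ∃ x : A, y = x * a} = {y : A | ∃ x : A, y = a * x}) ↔
        ∃ l₁ l₂ l₃ : K,
          σ₁ a = l₁ • a ∧ σ₂ a = l₂ • a ∧ x₃ * a - a * x₃ = l₃ • a) := by
  obtain ⟨hq0, hq1, hcase, r21, r31, r32, pbw⟩ := hbq
  exact BQ.main ⟨q, α, μ, x₁, x₂, x₃, hq0, r21, r31, r32, pbw⟩ σ₁ σ₂ hσ₁ hσ₂

end
end
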